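/- arXiv:1011.0067 — 10 statements merged into one kernel-verified Lean document; each statement's English description precedes it below -/
import Mathlib

section
/- For all 0 ≤ s < t < T, the inverse of Σ(s,t) satisfies Σ(s,t)⁻¹ = κ(s,t)⁻¹ + E(T,t)ᵀ κ(t,T)⁻¹ E(T,t). In particular, Σ(s,t) is symmetric and positive definite for all 0 ≤ s < t < T. -/
open MeasureTheory Matrix Topology Filter

attribute [local instance] Matrix.normedAddCommGroup Matrix.normedSpace

/-- Lemma 2 (gen_sigma_identity): for `0 ≤ s < t < T`,
`Σ(s,t)⁻¹ = κ(s,t)⁻¹ + E(T,t)ᵀ κ(t,T)⁻¹ E(T,t)`; in particular `Σ(s,t)` is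
symmetric and positive definite. -/
theorem sigma_inverse_identity
    {d p : ℕ} (hd : 1 ≤ d)
    (Q : ℝ → Matrix (Fin d) (Fin d) ℝ) (S : ℝ → Matrix (Fin d) (Fin p) ℝ)
    (hQ : ContinuousOn Q (Set.Ici 0)) (hS : ContinuousOn S (Set.Ici 0))
    (E : ℝ → ℝ → Matrix (Fin d) (Fin d) ℝ)
    (hEcont : ContinuousOn (fun x : ℝ × ℝ => E x.1 x.2) (Set.Ici 0 ×ˢ Set.Ici 0))
    (hEid : ∀ t : ℝ, 0 ≤ t → E t t = 1)
    (hEmul : ∀ r s t : ℝ, 0 ≤ r → 0 ≤ s → 0 ≤ t → E t s * E s r = E t r)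
    (hEderiv : ∀ s : ℝ, 0 ≤ s → ∀ t : ℝ, 0 ≤ t →
      HasDerivAt (fun τ => E τ s) (Q t * E t s) t)
    (κ Γ : ℝ → ℝ → Matrix (Fin d) (Fin d) ℝ)
    (hκ : ∀ s t : ℝ, 0 ≤ s → s ≤ t →
      κ s t = ∫ u in s..t, E t u * S u * (S u)ᵀ * (E t u)ᵀ)
    (hΓ : ∀ s t : ℝ, 0 ≤ s → s ≤ t → Γ s t = E s t * κ s t)
    (T : ℝ) (hT : 0 < T)
    (hκpd : ∀ s t : ℝ, 0 ≤ s → s < t → (κ s t).IsSymm ∧ (κ s t).PosDef)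
    (Sg : ℝ → ℝ → Matrix (Fin d) (Fin d) ℝ)
    (hSg : ∀ s t : ℝ, 0 ≤ s → s < t → t < T → Sg s t = Γ t T * (Γ s T)⁻¹ * Γ s t) :
    ∀ s t : ℝ, 0 ≤ s → s < t → t < T →
      (Sg s t)⁻¹ = (κ s t)⁻¹ + (E T t)ᵀ * (κ t T)⁻¹ * E T t
        ∧ (Sg s t).IsSymm ∧ (Sg s t).PosDef := by
  intro s t hs hst htT
  have ht : (0:ℝ) ≤ t := le_trans hs hst.le
  have hT0 : (0:ℝ) ≤ T := hT.le
  have hsT : s < T := hst.trans htT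
  -- continuity of the integrand
  have hcont : ∀ w : ℝ, 0 ≤ w →
      ContinuousOn (fun u => E w u * S u * (S u)ᵀ * (E w u)ᵀ) (Set.Ici (0:ℝ)) := by
    intro w hw
    have hE : ContinuousOn (fun u : ℝ => E w u) (Set.Ici (0:ℝ)) := by
      exact hEcont.comp ((Continuous.prodMk_right w).continuousOn)
        (fun u hu => Set.mk_mem_prod hw hu)
    have hS' := hS
    rw [continuousOn_iff_continuous_restrict] at hE hS' ⊢
    exact ((hE.matrix_mul hS').matrix_mul hS'.matrix_transpose).matrix_mul hE.matrix_transpose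
  letI : ENormedAddMonoid (Matrix (Fin d) (Fin d) ℝ) := NormedAddGroup.toENormedAddMonoid
  have hInt : ∀ w : ℝ, 0 ≤ w → ∀ a b : ℝ, 0 ≤ a → 0 ≤ b →
      IntervalIntegrable (fun u => E w u * S u * (S u)ᵀ * (E w u)ᵀ) volume a b := by
    intro w hw a b ha hb
    apply ContinuousOn.intervalIntegrable
    refine (hcont w hw).mono ?_
    intro x hx
    rw [Set.mem_uIcc] at hx
    rcases hx with h | h
    · exact le_trans ha h.1
    · exact le_trans hb h.1
  -- the splitting identity
  have key_split : κ s T = κ t T + E T t * κ s t * (E T t)ᵀ := by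
    have h1 : κ s T = (∫ u in s..t, E T u * S u * (S u)ᵀ * (E T u)ᵀ)
        + ∫ u in t..T, E T u * S u * (S u)ᵀ * (E T u)ᵀ := by
      rw [hκ s T hs hsT.le,
        ← intervalIntegral.integral_add_adjacent_intervals
          (hInt T hT0 s t hs ht) (hInt T hT0 t T ht hT0)]
    have hcongr : Set.EqOn (fun u => E T u * S u * (S u)ᵀ * (E T u)ᵀ)
        (fun u => E T t * (E t u * S u * (S u)ᵀ * (E t u)ᵀ) * (E T t)ᵀ) (Set.uIcc s t) := by
      intro u hu
      rw [Set.uIcc_of_le hst.le] at hu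
      have hu0 : 0 ≤ u := le_trans hs hu.1
      have hEu : E T u = E T t * E t u := (hEmul u t T hu0 ht hT0).symm
      simp only [hEu, Matrix.transpose_mul, Matrix.mul_assoc]
    let L : Matrix (Fin d) (Fin d) ℝ →ₗ[ℝ] Matrix (Fin d) (Fin d) ℝ :=
      { toFun := fun M => E T t * M * (E T t)ᵀ,
        map_add' := fun M N => by noncomm_ring,
        map_smul' := fun c M => by simp [Matrix.mul_smul, Matrix.smul_mul] }
    have h2 : (∫ u in s..t, E T t * (E t u * S u * (S u)ᵀ * (E t u)ᵀ) * (E T t)ᵀ)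
        = E T t * (∫ u in s..t, E t u * S u * (S u)ᵀ * (E t u)ᵀ) * (E T t)ᵀ := by
      have h := (LinearMap.toContinuousLinearMap L).intervalIntegral_comp_comm
        (hInt t ht s t hs ht)
      exact h
    rw [h1, intervalIntegral.integral_congr hcongr, h2, ← hκ s t hs hst.le,
      ← hκ t T ht (le_of_lt htT), add_comm]
  -- basic invertibility facts
  have hmulinv : ∀ (M : Matrix (Fin d) (Fin d) ℝ), M.PosDef → M * M⁻¹ = 1 ∧ M⁻¹ * M = 1 := by
    intro M hM
    have hdet : IsUnit M.det := isUnit_iff_ne_zero.mpr (ne_of_gt hM.det_pos)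
    exact ⟨Matrix.mul_nonsing_inv M hdet, Matrix.nonsing_inv_mul M hdet⟩
  have hK1pd := (hκpd s t hs hst).2
  have hK2pd := (hκpd t T ht htT).2
  have hKpd := (hκpd s T hs hsT).2
  have hK1u := hmulinv _ hK1pd
  have hK2u := hmulinv _ hK2pd
  have hKu := hmulinv _ hKpd
  have hab : E t T * E T t = 1 := by rw [hEmul t T t ht hT0 ht, hEid t ht]
  -- the expression for Sg
  have hSgeq : Sg s t = E t T * κ t T * (κ s T)⁻¹ * E T t * κ s t := by
    rw [hSg s t hs hst htT, hΓ t T ht htT.le, hΓ s T hs hsT.le, hΓ s t hs hst.le,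
      Matrix.mul_inv_rev]
    have hinvE : (E s T)⁻¹ = E T s :=
      Matrix.inv_eq_right_inv (by rw [hEmul s T s hs hT0 hs, hEid s hs])
    rw [hinvE]
    have h3 : E T s * E s t = E T t := hEmul t s T ht hs hT0
    calc E t T * κ t T * ((κ s T)⁻¹ * E T s) * (E s t * κ s t)
        = E t T * κ t T * (κ s T)⁻¹ * (E T s * E s t) * κ s t := by noncomm_ring
      _ = E t T * κ t T * (κ s T)⁻¹ * E T t * κ s t := by rw [h3]
  -- main algebraic identity
  have e1 : E T t * κ s t * (E T t)ᵀ = κ s T - κ t T := by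
    rw [key_split]; abel
  have key : Sg s t * ((κ s t)⁻¹ + (E T t)ᵀ * (κ t T)⁻¹ * E T t) = 1 := by
    rw [hSgeq]
    calc E t T * κ t T * (κ s T)⁻¹ * E T t * κ s t * ((κ s t)⁻¹ + (E T t)ᵀ * (κ t T)⁻¹ * E T t)
        = E t T * κ t T * (κ s T)⁻¹ * (E T t * (κ s t * (κ s t)⁻¹))
          + E t T * κ t T * (κ s T)⁻¹ * (E T t * κ s t * (E T t)ᵀ) * ((κ t T)⁻¹ * E T t) := by
          noncomm_ring
      _ = E t T * κ t T * (κ s T)⁻¹ * (E T t * 1)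
          + E t T * κ t T * (κ s T)⁻¹ * (κ s T - κ t T) * ((κ t T)⁻¹ * E T t) := by
          rw [hK1u.1, e1]
      _ = E t T * (κ t T * (((κ s T)⁻¹ * κ s T) * (κ t T)⁻¹)) * E T t
          - E t T * (κ t T * ((κ s T)⁻¹ * (κ t T * (κ t T)⁻¹))) * E T t
          + E t T * κ t T * (κ s T)⁻¹ * (E T t * 1) := by noncomm_ring
      _ = E t T * (κ t T * (1 * (κ t T)⁻¹)) * E T t
          - E t T * (κ t T * ((κ s T)⁻¹ * 1)) * E T t
          + E t T * κ t T * (κ s T)⁻¹ * (E T t * 1) := by rw [hKu.2, hK2u.1]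
      _ = E t T * (κ t T * (κ t T)⁻¹) * E T t := by noncomm_ring
      _ = 1 := by rw [hK2u.1, mul_one, hab]
  have hSinv : (Sg s t)⁻¹ = (κ s t)⁻¹ + (E T t)ᵀ * (κ t T)⁻¹ * E T t :=
    Matrix.inv_eq_right_inv key
  have key' : ((κ s t)⁻¹ + (E T t)ᵀ * (κ t T)⁻¹ * E T t) * Sg s t = 1 :=
    mul_eq_one_comm.mp key
  have hSgM : Sg s t = ((κ s t)⁻¹ + (E T t)ᵀ * (κ t T)⁻¹ * E T t)⁻¹ :=
    (Matrix.inv_eq_right_inv key').symm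
  have hsemi : ((E T t)ᵀ * (κ t T)⁻¹ * E T t).PosSemidef := by
    have h := (hK2pd.inv.posSemidef).conjTranspose_mul_mul_same (E T t)
    rwa [Matrix.conjTranspose_eq_transpose_of_trivial] at h
  have hMpd : ((κ s t)⁻¹ + (E T t)ᵀ * (κ t T)⁻¹ * E T t).PosDef :=
    hK1pd.inv.add_posSemidef hsemi
  have hSgpd : (Sg s t).PosDef := hSgM ▸ hMpd.inv
  refine ⟨hSinv, ?_, hSgpd⟩
  show (Sg s t)ᵀ = Sg s t
  rw [← Matrix.conjTranspose_eq_transpose_of_trivial]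
  exact hSgpd.isHermitian
end

section
/- For all 0 ≤ s < t < T one has κ(t,T)⁻¹ − κ(s,T)⁻¹ = Γ(s,T)⁻¹ Γ(s,t) (Γ(t,T)ᵀ)⁻¹. -/
open MeasureTheory Matrix Topology Filter

attribute [local instance] Matrix.normedAddCommGroup Matrix.normedSpace

private theorem continuousOn_matrix_mul {X : Type*} [TopologicalSpace X]
    {l m n : Type*} [Fintype m]
    {A : X → Matrix l m ℝ} {B : X → Matrix m n ℝ} {s : Set X}
    (hA : ContinuousOn A s) (hB : ContinuousOn B s) :
    ContinuousOn (fun x => A x * B x) s := by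
  have h : Continuous (fun q : Matrix l m ℝ × Matrix m n ℝ => q.1 * q.2) :=
    (continuous_fst.matrix_mul continuous_snd)
  exact h.comp_continuousOn (hA.prodMk hB)

private theorem continuousOn_matrix_transpose {X : Type*} [TopologicalSpace X]
    {l m : Type*} {A : X → Matrix l m ℝ} {s : Set X}
    (hA : ContinuousOn A s) : ContinuousOn (fun x => (A x)ᵀ) s :=
  (continuous_id.matrix_transpose).comp_continuousOn hA

/-- Lemma 3(a): for `0 ≤ s < t < T`,
`κ(t,T)⁻¹ − κ(s,T)⁻¹ = Γ(s,T)⁻¹ Γ(s,t) (Γ(t,T)ᵀ)⁻¹`. -/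
theorem kappa_inverse_difference
    {d p : ℕ} (hd : 1 ≤ d)
    (Q : ℝ → Matrix (Fin d) (Fin d) ℝ) (S : ℝ → Matrix (Fin d) (Fin p) ℝ)
    (hQ : ContinuousOn Q (Set.Ici 0)) (hS : ContinuousOn S (Set.Ici 0))
    (E : ℝ → ℝ → Matrix (Fin d) (Fin d) ℝ)
    (hEcont : ContinuousOn (fun x : ℝ × ℝ => E x.1 x.2) (Set.Ici 0 ×ˢ Set.Ici 0))
    (hEid : ∀ t : ℝ, 0 ≤ t → E t t = 1)
    (hEmul : ∀ r s t : ℝ, 0 ≤ r → 0 ≤ s → 0 ≤ t → E t s * E s r = E t r)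
    (hEderiv : ∀ s : ℝ, 0 ≤ s → ∀ t : ℝ, 0 ≤ t →
      HasDerivAt (fun τ => E τ s) (Q t * E t s) t)
    (κ Γ : ℝ → ℝ → Matrix (Fin d) (Fin d) ℝ)
    (hκ : ∀ s t : ℝ, 0 ≤ s → s ≤ t →
      κ s t = ∫ u in s..t, E t u * S u * (S u)ᵀ * (E t u)ᵀ)
    (hΓ : ∀ s t : ℝ, 0 ≤ s → s ≤ t → Γ s t = E s t * κ s t)
    (T : ℝ) (hT : 0 < T)
    (hκpd : ∀ s t : ℝ, 0 ≤ s → s < t → (κ s t).IsSymm ∧ (κ s t).PosDef) :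
    ∀ s t : ℝ, 0 ≤ s → s < t → t < T →
      (κ t T)⁻¹ - (κ s T)⁻¹ = (Γ s T)⁻¹ * Γ s t * ((Γ t T)ᵀ)⁻¹ := by
  intro s t hs hst htT
  have ht : (0:ℝ) ≤ t := hs.trans hst.le
  have hT0 : (0:ℝ) ≤ T := hT.le
  have hsT : s < T := hst.trans htT
  -- continuity of the integrand
  have hcont : ∀ v : ℝ, 0 ≤ v →
      ContinuousOn (fun u => E v u * S u * (S u)ᵀ * (E v u)ᵀ) (Set.Ici 0) := by
    intro v hv
    have hE : ContinuousOn (fun u => E v u) (Set.Ici 0) := by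
      have hmap : ContinuousOn ((fun x : ℝ × ℝ => E x.1 x.2) ∘ (fun u : ℝ => (v, u)))
          (Set.Ici 0) :=
        hEcont.comp (Continuous.continuousOn (by continuity))
          (fun u hu => ⟨hv, hu⟩)
      exact hmap
    exact continuousOn_matrix_mul
      (continuousOn_matrix_mul (continuousOn_matrix_mul hE hS)
        (continuousOn_matrix_transpose hS))
      (continuousOn_matrix_transpose hE)
  letI : ENormedAddMonoid (Matrix (Fin d) (Fin d) ℝ) := NormedAddGroup.toENormedAddMonoid
  have hint : ∀ a b v : ℝ, 0 ≤ a → a ≤ b → 0 ≤ v →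
      IntervalIntegrable (fun u => E v u * S u * (S u)ᵀ * (E v u)ᵀ) volume a b := by
    intro a b v ha hab hv
    apply ContinuousOn.intervalIntegrable
    apply (hcont v hv).mono
    rw [Set.uIcc_of_le hab]
    exact fun x hx => ha.trans hx.1
  -- basic flow identities
  have hM1 : E T t * E t T = 1 := by rw [hEmul T t T hT0 ht hT0, hEid T hT0]
  have hEsTinv : (E s T)⁻¹ = E T s :=
    Matrix.inv_eq_right_inv (by rw [hEmul s T s hs hT0 hs, hEid s hs])
  have hEtTtinv : ((E t T)ᵀ)⁻¹ = (E T t)ᵀ :=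
    Matrix.inv_eq_right_inv (by rw [← Matrix.transpose_mul, hM1, Matrix.transpose_one])
  have hEE : E T s * E s t = E T t := hEmul t s T ht hs hT0
  -- the key decomposition κ s T = E T t * κ s t * (E T t)ᵀ + κ t T
  have key : κ s T = E T t * κ s t * (E T t)ᵀ + κ t T := by
    have hsplit : (∫ u in s..T, E T u * S u * (S u)ᵀ * (E T u)ᵀ)
        = (∫ u in s..t, E T u * S u * (S u)ᵀ * (E T u)ᵀ)
          + ∫ u in t..T, E T u * S u * (S u)ᵀ * (E T u)ᵀ :=
      (intervalIntegral.integral_add_adjacent_intervals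
        (hint s t T hs hst.le hT0) (hint t T T ht htT.le hT0)).symm
    have hcongr : (∫ u in s..t, E T u * S u * (S u)ᵀ * (E T u)ᵀ)
        = ∫ u in s..t, E T t * (E t u * S u * (S u)ᵀ * (E t u)ᵀ) * (E T t)ᵀ := by
      apply intervalIntegral.integral_congr
      intro u hu
      rw [Set.uIcc_of_le hst.le] at hu
      have hu0 : (0:ℝ) ≤ u := hs.trans hu.1
      have he : E T u = E T t * E t u := (hEmul u t T hu0 ht hT0).symm
      simp only [he, Matrix.transpose_mul, Matrix.mul_assoc]
    have hpull : (∫ u in s..t, E T t * (E t u * S u * (S u)ᵀ * (E t u)ᵀ) * (E T t)ᵀ)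
        = E T t * (∫ u in s..t, E t u * S u * (S u)ᵀ * (E t u)ᵀ) * (E T t)ᵀ := by
      let L : Matrix (Fin d) (Fin d) ℝ →ₗ[ℝ] Matrix (Fin d) (Fin d) ℝ :=
        { toFun := fun X => E T t * X * (E T t)ᵀ
          map_add' := fun X Y => by simp [Matrix.mul_add, Matrix.add_mul]
          map_smul' := fun c X => by simp [Matrix.mul_smul, Matrix.smul_mul] }
      have hLL := (LinearMap.toContinuousLinearMap L).intervalIntegral_comp_comm
        (μ := volume) (a := s) (b := t) (hint s t t hs hst.le ht)
      exact hLL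
    rw [hκ s T hs hsT.le, hsplit, hcongr, hpull, ← hκ s t hs hst.le, ← hκ t T ht htT.le]
  -- symmetry and invertibility
  have hBsym : (κ t T)ᵀ = κ t T := (hκpd t T ht htT).1
  have hKu : IsUnit (κ s T).det := ((hκpd s T hs hsT).2.det_pos).ne'.isUnit
  have hBu : IsUnit (κ t T).det := ((hκpd t T ht htT).2.det_pos).ne'.isUnit
  have hMAM : E T t * κ s t * (E T t)ᵀ = κ s T - κ t T := eq_sub_of_add_eq key.symm
  -- algebra
  rw [hΓ s T hs hsT.le, hΓ s t hs hst.le, hΓ t T ht htT.le,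
      Matrix.transpose_mul, hBsym, Matrix.mul_inv_rev, Matrix.mul_inv_rev,
      hEsTinv, hEtTtinv]
  have final : (κ s T)⁻¹ * E T s * (E s t * κ s t) * ((E T t)ᵀ * (κ t T)⁻¹)
      = (κ t T)⁻¹ - (κ s T)⁻¹ := by
    have h1 : (κ s T)⁻¹ * E T s * (E s t * κ s t) * ((E T t)ᵀ * (κ t T)⁻¹)
        = (κ s T)⁻¹ * (E T t * κ s t * (E T t)ᵀ) * (κ t T)⁻¹ := by
      simp only [← Matrix.mul_assoc]
      rw [Matrix.mul_assoc ((κ s T)⁻¹) (E T s) (E s t), hEE]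
    rw [h1, hMAM, Matrix.mul_sub, Matrix.nonsing_inv_mul _ hKu, Matrix.sub_mul, one_mul,
        Matrix.mul_assoc, Matrix.mul_nonsing_inv _ hBu, Matrix.mul_one]
  rw [final]
end

section
/- For all 0 ≤ s < t < T one has Σ(s,t) = Γ(t,T) · (∫_s^t Γ(u,T)⁻¹ S(u)S(u)ᵀ (Γ(u,T)ᵀ)⁻¹ du) · Γ(t,T)ᵀ. -/
open MeasureTheory Matrix Topology Filter

attribute [local instance] Matrix.normedAddCommGroup Matrix.normedSpace

noncomputable instance matENormedAddMonoidInst {m n : Type*} [Fintype m] [Fintype n] :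
    ENormedAddMonoid (Matrix m n ℝ) := by
  exact NormedAddGroup.toENormedAddMonoid

instance matPseudoMetrizableInst {m n : Type*} [Fintype m] [Fintype n] :
    TopologicalSpace.PseudoMetrizableSpace (Matrix m n ℝ) := by
  exact (inferInstance : @TopologicalSpace.PseudoMetrizableSpace (Matrix m n ℝ)
    PseudoMetricSpace.toUniformSpace.toTopologicalSpace)

private theorem contOn_matMul {X : Type*} [TopologicalSpace X] {l m q : ℕ}
    {A : X → Matrix (Fin l) (Fin m) ℝ} {B : X → Matrix (Fin m) (Fin q) ℝ} {s : Set X}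
    (hA : ContinuousOn A s) (hB : ContinuousOn B s) :
    ContinuousOn (fun x => A x * B x) s :=
  (Continuous.matrix_mul continuous_fst continuous_snd).comp_continuousOn (hA.prodMk hB)

private theorem contOn_matTranspose {X : Type*} [TopologicalSpace X] {l m : ℕ}
    {A : X → Matrix (Fin l) (Fin m) ℝ} {s : Set X} (hA : ContinuousOn A s) :
    ContinuousOn (fun x => (A x)ᵀ) s :=
  (continuous_id.matrix_transpose).comp_continuousOn hA

private theorem hasDerivAt_matrix_inv {n : ℕ}
    {A : ℝ → Matrix (Fin n) (Fin n) ℝ} {A' : Matrix (Fin n) (Fin n) ℝ} {x : ℝ}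
    (hA : HasDerivAt A A' x) (h : IsUnit (A x).det) :
    HasDerivAt (fun u => (A u)⁻¹) (-((A x)⁻¹ * A' * (A x)⁻¹)) x := by
  have hcA : ContinuousAt A x := hA.continuousAt
  have hdet : ContinuousAt (fun u => (A u).det) x :=
    (continuous_id.matrix_det.continuousAt).comp hcA
  have hdet0 : (A x).det ≠ 0 := h.ne_zero
  have hinvR : ContinuousAt (Ring.inverse : ℝ → ℝ) ((A x).det) := by
    rw [Ring.inverse_eq_inv']
    exact continuousAt_inv₀ hdet0
  have hinv : ContinuousAt (fun u => (A u)⁻¹) x :=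
    (continuousAt_matrix_inv (A x) hinvR).comp hcA
  have hev : ∀ᶠ u in 𝓝 x, IsUnit (A u).det := by
    filter_upwards [hdet.eventually_ne hdet0] with u hu
    exact isUnit_iff_ne_zero.mpr hu
  replace hA := hasDerivAt_iff_tendsto_slope.mp hA
  refine hasDerivAt_iff_tendsto_slope.mpr ?_
  have key : (fun u => -((A u)⁻¹ * slope A x u * (A x)⁻¹)) =ᶠ[𝓝[≠] x]
      slope (fun u => (A u)⁻¹) x := by
    filter_upwards [eventually_nhdsWithin_of_eventually_nhds hev, self_mem_nhdsWithin]
      with u hu hu'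
    have h2 : (A u)⁻¹ * A u = 1 := Matrix.nonsing_inv_mul _ hu
    have h3 : A x * (A x)⁻¹ = 1 := Matrix.mul_nonsing_inv _ h
    have hdiff : (A u)⁻¹ - (A x)⁻¹ = -((A u)⁻¹ * (A u - A x) * (A x)⁻¹) := by
      have : (A u)⁻¹ * (A u - A x) * (A x)⁻¹ = (A x)⁻¹ - (A u)⁻¹ := by
        rw [mul_sub, sub_mul, h2, one_mul, mul_assoc, h3, mul_one]
      rw [this, neg_sub]
    rw [slope_def_module, slope_def_module, hdiff]
    rw [Matrix.mul_smul, Matrix.smul_mul, smul_neg]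
  refine Tendsto.congr' key ?_
  have hinv' : Tendsto (fun u => (A u)⁻¹) (𝓝[≠] x) (𝓝 ((A x)⁻¹)) :=
    hinv.continuousWithinAt.tendsto
  exact ((hinv'.mul hA).mul tendsto_const_nhds).neg

private noncomputable def conjCLM {n : ℕ} (A B : Matrix (Fin n) (Fin n) ℝ) :
    Matrix (Fin n) (Fin n) ℝ →L[ℝ] Matrix (Fin n) (Fin n) ℝ :=
  LinearMap.toContinuousLinearMap
  { toFun := fun M => A * M * B
    map_add' := fun M N => by show A * (M + N) * B = A * M * B + A * N * B; rw [mul_add, add_mul]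
    map_smul' := fun c M => by
      simp [Matrix.mul_smul, Matrix.smul_mul] }

private theorem conj_intervalIntegral {n : ℕ} (A B : Matrix (Fin n) (Fin n) ℝ)
    {f : ℝ → Matrix (Fin n) (Fin n) ℝ} {a b : ℝ}
    (hf : IntervalIntegrable f MeasureTheory.volume a b) :
    (∫ u in a..b, A * f u * B) = A * (∫ u in a..b, f u) * B := by
  have := (conjCLM A B).intervalIntegral_comp_comm hf
  exact this

/-- Lemma 3(b): for `0 ≤ s < t < T`,
`Σ(s,t) = Γ(t,T) (∫_s^t Γ(u,T)⁻¹ S(u)S(u)ᵀ (Γ(u,T)ᵀ)⁻¹ du) Γ(t,T)ᵀ`. -/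
theorem sigma_integral_representation
    {d p : ℕ} (hd : 1 ≤ d)
    (Q : ℝ → Matrix (Fin d) (Fin d) ℝ) (S : ℝ → Matrix (Fin d) (Fin p) ℝ)
    (hQ : ContinuousOn Q (Set.Ici 0)) (hS : ContinuousOn S (Set.Ici 0))
    (E : ℝ → ℝ → Matrix (Fin d) (Fin d) ℝ)
    (hEcont : ContinuousOn (fun x : ℝ × ℝ => E x.1 x.2) (Set.Ici 0 ×ˢ Set.Ici 0))
    (hEid : ∀ t : ℝ, 0 ≤ t → E t t = 1)
    (hEmul : ∀ r s t : ℝ, 0 ≤ r → 0 ≤ s → 0 ≤ t → E t s * E s r = E t r)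
    (hEderiv : ∀ s : ℝ, 0 ≤ s → ∀ t : ℝ, 0 ≤ t →
      HasDerivAt (fun τ => E τ s) (Q t * E t s) t)
    (κ Γ : ℝ → ℝ → Matrix (Fin d) (Fin d) ℝ)
    (hκ : ∀ s t : ℝ, 0 ≤ s → s ≤ t →
      κ s t = ∫ u in s..t, E t u * S u * (S u)ᵀ * (E t u)ᵀ)
    (hΓ : ∀ s t : ℝ, 0 ≤ s → s ≤ t → Γ s t = E s t * κ s t)
    (T : ℝ) (hT : 0 < T)
    (hκpd : ∀ s t : ℝ, 0 ≤ s → s < t → (κ s t).IsSymm ∧ (κ s t).PosDef)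
    (Sg : ℝ → ℝ → Matrix (Fin d) (Fin d) ℝ)
    (hSg : ∀ s t : ℝ, 0 ≤ s → s < t → t < T → Sg s t = Γ t T * (Γ s T)⁻¹ * Γ s t) :
    ∀ s t : ℝ, 0 ≤ s → s < t → t < T →
      Sg s t
        = Γ t T * (∫ u in s..t, (Γ u T)⁻¹ * S u * (S u)ᵀ * ((Γ u T)ᵀ)⁻¹) * (Γ t T)ᵀ := by
  intro s t hs hst htT
  have hsle : s ≤ t := hst.le
  have ht0 : (0:ℝ) ≤ t := le_trans hs hsle
  have hsT : s < T := lt_trans hst htT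
  have htle : t ≤ T := htT.le
  have hT0 : (0:ℝ) ≤ T := hT.le
  -- continuity of the integrand family
  have hEc : ∀ c : ℝ, 0 ≤ c → ContinuousOn (fun u : ℝ => E c u) (Set.Ici 0) := by
    intro c hc
    have h1 : ContinuousOn (fun u : ℝ => ((c, u) : ℝ × ℝ)) (Set.Ici 0) :=
      (continuous_const.prodMk continuous_id).continuousOn
    exact hEcont.comp h1 (fun u hu => ⟨hc, hu⟩)
  have hfc : ∀ c : ℝ, 0 ≤ c →
      ContinuousOn (fun u : ℝ => E c u * S u * (S u)ᵀ * (E c u)ᵀ) (Set.Ici 0) := by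
    intro c hc
    exact contOn_matMul (contOn_matMul (contOn_matMul (hEc c hc) hS)
      (contOn_matTranspose hS)) (contOn_matTranspose (hEc c hc))
  have hfint : ∀ c a b : ℝ, 0 ≤ c → 0 ≤ a → 0 ≤ b →
      IntervalIntegrable (fun u : ℝ => E c u * S u * (S u)ᵀ * (E c u)ᵀ)
        MeasureTheory.volume a b := by
    intro c a b hc ha hb
    apply ContinuousOn.intervalIntegrable
    exact (hfc c hc).mono (fun x hx => le_trans (le_min ha hb) hx.1)
  set f : ℝ → Matrix (Fin d) (Fin d) ℝ :=
    fun u => E T u * S u * (S u)ᵀ * (E T u)ᵀ with hf_def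
  -- κ(·,T) as a primitive, and its continuity on [s,t]
  have hκeq : ∀ u ∈ Set.Icc s t, κ u T = ∫ x in u..T, f x := fun u hu =>
    hκ u T (le_trans hs hu.1) (le_trans hu.2 htle)
  have hκcont : ContinuousOn (fun u => κ u T) (Set.Icc s t) := by
    have hbase : ContinuousOn (fun u => ∫ x in u..T, f x) (Set.Icc s t) := by
      intro b₀ hb₀
      have h1 : ContinuousWithinAt (fun b => ∫ x in T..b, f x) (Set.Icc s t) b₀ :=
        intervalIntegral.continuousWithinAt_primitive (measure_singleton b₀)
          (hfint T (min T s) (max T t) hT0 (le_min hT0 hs) (le_max_of_le_left hT0))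
      have h2 := h1.neg
      refine ContinuousWithinAt.congr h2 (fun u hu => ?_) ?_ <;>
        rw [intervalIntegral.integral_symm] <;> rfl
    exact hbase.congr hκeq
  -- invertibility and symmetry facts
  have hκsymm : ∀ u : ℝ, 0 ≤ u → u < T → (κ u T)ᵀ = κ u T := fun u hu huT =>
    (hκpd u T hu huT).1
  have hκdet : ∀ u : ℝ, 0 ≤ u → u < T → IsUnit (κ u T).det := fun u hu huT =>
    isUnit_iff_ne_zero.mpr (ne_of_gt (hκpd u T hu huT).2.det_pos)
  set g : ℝ → Matrix (Fin d) (Fin d) ℝ := fun u => (κ u T)⁻¹ with hg_def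
  have hgcont : ContinuousOn g (Set.Icc s t) := by
    intro u hu
    have hu0 : 0 ≤ u := le_trans hs hu.1
    have huT : u < T := lt_of_le_of_lt hu.2 htT
    have hRinv : ContinuousAt (Ring.inverse : ℝ → ℝ) ((κ u T).det) := by
      rw [Ring.inverse_eq_inv']
      exact continuousAt_inv₀ (hκdet u hu0 huT).ne_zero
    have h1 : Filter.Tendsto (fun v => κ v T) (𝓝[Set.Icc s t] u) (𝓝 (κ u T)) := hκcont u hu
    have h2 : Filter.Tendsto (Inv.inv : Matrix (Fin d) (Fin d) ℝ → _)
        (𝓝 (κ u T)) (𝓝 ((κ u T)⁻¹)) := continuousAt_matrix_inv (κ u T) hRinv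
    exact Filter.Tendsto.comp h2 h1
  -- derivative of κ(·,T) at interior points
  have hκderiv : ∀ u ∈ Set.Ioo s t, HasDerivAt (fun v => κ v T) (-(f u)) u := by
    intro u hu
    have hu0 : 0 < u := lt_of_le_of_lt hs hu.1
    have huT : u < T := lt_trans hu.2 htT
    have hmeas : StronglyMeasurableAtFilter f (𝓝 u) :=
      ⟨Set.Ioi 0, Ioi_mem_nhds hu0,
        ((hfc T hT0).mono Set.Ioi_subset_Ici_self).aestronglyMeasurable measurableSet_Ioi⟩
    have hbase : HasDerivAt (fun v => ∫ x in v..T, f x) (-(f u)) u :=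
      intervalIntegral.integral_hasDerivAt_left (hfint T u T hT0 hu0.le hT0) hmeas
        ((hfc T hT0).continuousAt (Ici_mem_nhds hu0))
    refine hbase.congr_of_eventuallyEq ?_
    filter_upwards [Ioo_mem_nhds hu0 huT] with v hv
    exact hκ v T hv.1.le hv.2.le
  -- derivative of g at interior points
  have hgd : ∀ u ∈ Set.Ioo s t, HasDerivAt g (g u * f u * g u) u := by
    intro u hu
    have hu0 : 0 ≤ u := le_trans hs hu.1.le
    have huT : u < T := lt_trans hu.2 htT
    have h := hasDerivAt_matrix_inv (hκderiv u hu) (hκdet u hu0 huT)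
    simpa only [hg_def, mul_neg, neg_mul, neg_neg] using h
  -- FTC
  have hG'cont : ContinuousOn (fun u => g u * f u * g u) (Set.Icc s t) :=
    contOn_matMul (contOn_matMul hgcont
      ((hfc T hT0).mono (fun x hx => le_trans hs hx.1))) hgcont
  have hG'int : IntervalIntegrable (fun u => g u * f u * g u) MeasureTheory.volume s t := by
    apply ContinuousOn.intervalIntegrable
    rwa [Set.uIcc_of_le hsle]
  have hFTC : (∫ u in s..t, g u * f u * g u) = g t - g s :=
    intervalIntegral.integral_eq_sub_of_hasDeriv_right_of_le hsle hgcont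
      (fun x hx => (hgd x hx).hasDerivWithinAt) hG'int
  -- identify the integrand
  have hEinv : ∀ a b : ℝ, 0 ≤ a → 0 ≤ b → (E a b)⁻¹ = E b a := fun a b ha hb =>
    Matrix.inv_eq_right_inv (by rw [hEmul a b a ha hb ha, hEid a ha])
  have hΓinv : ∀ u : ℝ, 0 ≤ u → u < T → (Γ u T)⁻¹ = (κ u T)⁻¹ * E T u := by
    intro u hu huT
    rw [hΓ u T hu huT.le, Matrix.mul_inv_rev, hEinv u T hu hT0]
  have hinteq : Set.EqOn (fun u => (Γ u T)⁻¹ * S u * (S u)ᵀ * ((Γ u T)ᵀ)⁻¹)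
      (fun u => g u * f u * g u) (Set.uIcc s t) := by
    rw [Set.uIcc_of_le hsle]
    intro u hu
    have hu0 : 0 ≤ u := le_trans hs hu.1
    have huT : u < T := lt_of_le_of_lt hu.2 htT
    have h2 : ((Γ u T)ᵀ)⁻¹ = (E T u)ᵀ * (κ u T)⁻¹ := by
      rw [← Matrix.transpose_nonsing_inv, hΓinv u hu0 huT, Matrix.transpose_mul,
        Matrix.transpose_nonsing_inv, hκsymm u hu0 huT]
    show (Γ u T)⁻¹ * S u * (S u)ᵀ * ((Γ u T)ᵀ)⁻¹ = g u * f u * g u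
    rw [hΓinv u hu0 huT, h2, hg_def, hf_def]
    simp only [Matrix.mul_assoc]
  have hIntegrand : (∫ u in s..t, (Γ u T)⁻¹ * S u * (S u)ᵀ * ((Γ u T)ᵀ)⁻¹)
      = g t - g s := by
    rw [intervalIntegral.integral_congr hinteq, hFTC]
  rw [hSg s t hs hst htT, hIntegrand]
  -- splitting of κ
  have hsplit : κ s T = E T t * κ s t * (E T t)ᵀ + κ t T := by
    have hadd : (∫ x in s..t, f x) + (∫ x in t..T, f x) = ∫ x in s..T, f x :=
      intervalIntegral.integral_add_adjacent_intervals (hfint T s t hT0 hs ht0)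
        (hfint T t T hT0 ht0 hT0)
    have h2 : (∫ x in t..T, f x) = κ t T := (hκ t T ht0 htle).symm
    have h3 : (∫ x in s..t, f x) = E T t * κ s t * (E T t)ᵀ := by
      have hcg : Set.EqOn f
          (fun x => E T t * (E t x * S x * (S x)ᵀ * (E t x)ᵀ) * (E T t)ᵀ) (Set.uIcc s t) := by
        rw [Set.uIcc_of_le hsle]
        intro x hx
        have hx0 : 0 ≤ x := le_trans hs hx.1
        have hxE : E T t * E t x = E T x := hEmul x t T hx0 ht0 hT0
        have hxET : (E t x)ᵀ * (E T t)ᵀ = (E T x)ᵀ := by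
          rw [← Matrix.transpose_mul, hxE]
        show E T x * S x * (S x)ᵀ * (E T x)ᵀ
            = E T t * (E t x * S x * (S x)ᵀ * (E t x)ᵀ) * (E T t)ᵀ
        rw [← hxE, Matrix.transpose_mul]
        simp only [Matrix.mul_assoc]
      rw [intervalIntegral.integral_congr hcg,
        conj_intervalIntegral _ _ (hfint t s t ht0 hs ht0), ← hκ s t hs hsle]
    rw [hκ s T hs hsT.le, ← hadd, h2, h3]
  -- final algebra
  have h1 : E T t * E t T = 1 := by rw [hEmul T t T hT0 ht0 hT0, hEid T hT0]
  have h2 : E t T * E T t = 1 := by rw [hEmul t T t ht0 hT0 ht0, hEid t ht0]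
  have hETs : E T s * E s t = E T t := hEmul t s T ht0 hs hT0
  have e1 : (E T t)ᵀ * (E t T)ᵀ = 1 := by
    rw [← Matrix.transpose_mul, h2, Matrix.transpose_one]
  have hKdet : IsUnit (κ t T).det := hκdet t ht0 htT
  have hKsdet : IsUnit (κ s T).det := hκdet s hs hsT
  have hk_eq : κ s t = E t T * (κ s T - κ t T) * (E t T)ᵀ := by
    rw [hsplit, add_sub_cancel_right]
    simp only [Matrix.mul_assoc]
    rw [e1, Matrix.mul_one, ← Matrix.mul_assoc, h2, Matrix.one_mul]
  have cKs : ∀ Z : Matrix (Fin d) (Fin d) ℝ, (κ s T)⁻¹ * (κ s T * Z) = Z := fun Z => by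
    rw [← Matrix.mul_assoc, Matrix.nonsing_inv_mul _ hKsdet, Matrix.one_mul]
  have cK : ∀ Z : Matrix (Fin d) (Fin d) ℝ, (κ t T)⁻¹ * (κ t T * Z) = Z := fun Z => by
    rw [← Matrix.mul_assoc, Matrix.nonsing_inv_mul _ hKdet, Matrix.one_mul]
  have cE : ∀ Z : Matrix (Fin d) (Fin d) ℝ, E T t * (E t T * Z) = Z := fun Z => by
    rw [← Matrix.mul_assoc, h1, Matrix.one_mul]
  have cEs : ∀ Z : Matrix (Fin d) (Fin d) ℝ, E T s * (E s t * Z) = E T t * Z := fun Z => by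
    rw [← Matrix.mul_assoc, hETs]
  rw [hΓ t T ht0 htle, hΓ s t hs hsle, hΓinv s hs hsT, hg_def, hk_eq,
    Matrix.transpose_mul, hκsymm t ht0 htT]
  simp only [Matrix.mul_assoc, mul_sub, sub_mul, cEs, cE, cKs, cK]
end

section
/- For all 0 ≤ t < T one has E(t,0) − Γ(0,t)ᵀ (Γ(0,T)ᵀ)⁻¹ E(T,0) = Γ(t,T) Γ(0,T)⁻¹. -/
open MeasureTheory Matrix Topology Filter

attribute [local instance] Matrix.normedAddCommGroup Matrix.normedSpace

private lemma contOn_matrix_mul {X : Type*} [TopologicalSpace X] {l m n : ℕ} {s : Set X}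
    {A : X → Matrix (Fin l) (Fin m) ℝ} {B : X → Matrix (Fin m) (Fin n) ℝ}
    (hA : ContinuousOn A s) (hB : ContinuousOn B s) :
    ContinuousOn (fun x => A x * B x) s := by
  rw [continuousOn_iff_continuous_restrict] at *
  exact hA.matrix_mul hB

private lemma contOn_matrix_transpose {X : Type*} [TopologicalSpace X] {m n : ℕ} {s : Set X}
    {A : X → Matrix (Fin m) (Fin n) ℝ} (hA : ContinuousOn A s) :
    ContinuousOn (fun x => (A x)ᵀ) s := by
  rw [continuousOn_iff_continuous_restrict] at *
  exact hA.matrix_transpose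

private instance instENormedAddMonoidMatrixFin {n : ℕ} :
    ENormedAddMonoid (Matrix (Fin n) (Fin n) ℝ) :=
  NormedAddCommGroup.toENormedAddCommMonoid.toENormedAddMonoid

/-- Lemma 3(c): for `0 ≤ t < T`,
`E(t,0) − Γ(0,t)ᵀ (Γ(0,T)ᵀ)⁻¹ E(T,0) = Γ(t,T) Γ(0,T)⁻¹`. -/
theorem evolution_gamma_identity
    {d p : ℕ} (hd : 1 ≤ d)
    (Q : ℝ → Matrix (Fin d) (Fin d) ℝ) (S : ℝ → Matrix (Fin d) (Fin p) ℝ)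
    (hQ : ContinuousOn Q (Set.Ici 0)) (hS : ContinuousOn S (Set.Ici 0))
    (E : ℝ → ℝ → Matrix (Fin d) (Fin d) ℝ)
    (hEcont : ContinuousOn (fun x : ℝ × ℝ => E x.1 x.2) (Set.Ici 0 ×ˢ Set.Ici 0))
    (hEid : ∀ t : ℝ, 0 ≤ t → E t t = 1)
    (hEmul : ∀ r s t : ℝ, 0 ≤ r → 0 ≤ s → 0 ≤ t → E t s * E s r = E t r)
    (hEderiv : ∀ s : ℝ, 0 ≤ s → ∀ t : ℝ, 0 ≤ t →
      HasDerivAt (fun τ => E τ s) (Q t * E t s) t)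
    (κ Γ : ℝ → ℝ → Matrix (Fin d) (Fin d) ℝ)
    (hκ : ∀ s t : ℝ, 0 ≤ s → s ≤ t →
      κ s t = ∫ u in s..t, E t u * S u * (S u)ᵀ * (E t u)ᵀ)
    (hΓ : ∀ s t : ℝ, 0 ≤ s → s ≤ t → Γ s t = E s t * κ s t)
    (T : ℝ) (hT : 0 < T)
    (hκpd : ∀ s t : ℝ, 0 ≤ s → s < t → (κ s t).IsSymm ∧ (κ s t).PosDef) :
    ∀ t : ℝ, 0 ≤ t → t < T →
      E t 0 - (Γ 0 t)ᵀ * ((Γ 0 T)ᵀ)⁻¹ * E T 0 = Γ t T * (Γ 0 T)⁻¹ := by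
  intro t ht0 htT
  have h0T : (0:ℝ) ≤ T := hT.le
  have htT' : t ≤ T := htT.le
  -- continuity of integrands
  have hf_cont : ∀ a : ℝ, 0 ≤ a → ContinuousOn
      (fun u => E a u * S u * (S u)ᵀ * (E a u)ᵀ) (Set.Ici 0) := by
    intro a ha
    have hEa : ContinuousOn (fun u : ℝ => E a u) (Set.Ici 0) := by
      refine hEcont.comp ((continuous_const.prodMk continuous_id).continuousOn) ?_
      exact fun u hu => ⟨ha, hu⟩
    exact contOn_matrix_mul (contOn_matrix_mul (contOn_matrix_mul hEa hS)
      (contOn_matrix_transpose hS)) (contOn_matrix_transpose hEa)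
  have hsub : ∀ a b : ℝ, 0 ≤ a → a ≤ b → Set.uIcc a b ⊆ Set.Ici (0:ℝ) := by
    intro a b ha hab
    rw [Set.uIcc_of_le hab]
    exact (Set.Icc_subset_Ici_self).trans (Set.Ici_subset_Ici.mpr ha)
  have hint : ∀ a b : ℝ, 0 ≤ a → a ≤ b → IntervalIntegrable
      (fun u => E T u * S u * (S u)ᵀ * (E T u)ᵀ) volume a b :=
    fun a b ha hab => ((hf_cont T h0T).mono (hsub a b ha hab)).intervalIntegrable
  have hgint : IntervalIntegrable (fun u => E t u * S u * (S u)ᵀ * (E t u)ᵀ) volume 0 t :=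
    ((hf_cont t ht0).mono (hsub 0 t le_rfl ht0)).intervalIntegrable
  -- the conjugation map as a continuous linear map
  let L : Matrix (Fin d) (Fin d) ℝ →L[ℝ] Matrix (Fin d) (Fin d) ℝ :=
    LinearMap.toContinuousLinearMap
      ((LinearMap.mulLeft ℝ (E T t)).comp (LinearMap.mulRight ℝ (E T t)ᵀ))
  have hL : ∀ X, L X = E T t * X * (E T t)ᵀ := fun X => (mul_assoc _ _ _).symm
  -- splitting of κ
  have hsplit : κ 0 T = E T t * κ 0 t * (E T t)ᵀ + κ t T := by
    have hadd : (∫ u in (0:ℝ)..t, E T u * S u * (S u)ᵀ * (E T u)ᵀ) +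
        (∫ u in t..T, E T u * S u * (S u)ᵀ * (E T u)ᵀ) =
        ∫ u in (0:ℝ)..T, E T u * S u * (S u)ᵀ * (E T u)ᵀ :=
      intervalIntegral.integral_add_adjacent_intervals (hint 0 t le_rfl ht0) (hint t T ht0 htT')
    have hcg : Set.EqOn (fun u => E T u * S u * (S u)ᵀ * (E T u)ᵀ)
        (fun u => L (E t u * S u * (S u)ᵀ * (E t u)ᵀ)) (Set.uIcc 0 t) := by
      intro u hu
      rw [Set.uIcc_of_le ht0] at hu
      have hE : E T u = E T t * E t u := (hEmul u t T hu.1 ht0 h0T).symm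
      simp only [hL, hE, transpose_mul, Matrix.mul_assoc]
    have h1 : (∫ u in (0:ℝ)..t, E T u * S u * (S u)ᵀ * (E T u)ᵀ) =
        E T t * κ 0 t * (E T t)ᵀ := by
      rw [intervalIntegral.integral_congr hcg]
      erw [L.intervalIntegral_comp_comm hgint]
      rw [← hκ 0 t le_rfl ht0]
      exact hL _
    rw [hκ 0 T le_rfl h0T, ← hadd, h1, ← hκ t T ht0 htT']
  -- symmetry and invertibility facts
  have hκsymT : (κ 0 T)ᵀ = κ 0 T := (hκpd 0 T le_rfl hT).1
  have hκsymt : (κ 0 t)ᵀ = κ 0 t := by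
    rcases eq_or_lt_of_le ht0 with h | h
    · rw [← h, hκ 0 0 le_rfl le_rfl, intervalIntegral.integral_same, transpose_zero]
    · exact (hκpd 0 t le_rfl h).1
  have hκdet : IsUnit (κ 0 T).det := (hκpd 0 T le_rfl hT).2.det_pos.ne'.isUnit
  have hE1 : E T 0 * E 0 T = 1 := by rw [hEmul T 0 T h0T le_rfl h0T, hEid T h0T]
  have hE1' : E 0 T * E T 0 = 1 := by rw [hEmul 0 T 0 le_rfl h0T le_rfl, hEid 0 le_rfl]
  have hE2 : E t T * E T t = 1 := by rw [hEmul t T t ht0 h0T ht0, hEid t ht0]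
  have hE3 : E T 0 * E 0 t = E T t := hEmul t 0 T ht0 le_rfl h0T
  have hE4 : E t 0 * E 0 T = E t T := hEmul T 0 t h0T le_rfl ht0
  have hΓ0T := hΓ 0 T le_rfl h0T
  have hΓ0t := hΓ 0 t le_rfl ht0
  have hΓtT := hΓ t T ht0 htT'
  have hΓdet : IsUnit (Γ 0 T).det := by
    rw [hΓ0T, det_mul]
    exact (Matrix.isUnit_det_of_right_inverse hE1').mul hκdet
  have hinvT : ((Γ 0 T)ᵀ)⁻¹ = (E T 0)ᵀ * (κ 0 T)⁻¹ := by
    apply Matrix.inv_eq_right_inv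
    rw [hΓ0T, transpose_mul, hκsymT, mul_assoc, ← mul_assoc ((E 0 T)ᵀ), ← transpose_mul,
      hE1, transpose_one, one_mul, Matrix.mul_nonsing_inv _ hκdet]
  -- the key computation
  have hterm2 : (Γ 0 t)ᵀ * ((Γ 0 T)ᵀ)⁻¹ * E T 0 * Γ 0 T = κ 0 t * (E T t)ᵀ := by
    rw [hinvT, hΓ0t, hΓ0T, transpose_mul, hκsymt]
    simp only [mul_assoc]
    rw [← mul_assoc (E T 0) (E 0 T), hE1, one_mul, Matrix.nonsing_inv_mul _ hκdet, mul_one,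
      ← transpose_mul, hE3]
  have hterm1 : E t 0 * Γ 0 T = κ 0 t * (E T t)ᵀ + Γ t T := by
    rw [hΓ0T, ← mul_assoc, hE4, hsplit, mul_add, hΓtT, ← mul_assoc, ← mul_assoc, hE2, one_mul]
  have key : (E t 0 - (Γ 0 t)ᵀ * ((Γ 0 T)ᵀ)⁻¹ * E T 0) * Γ 0 T = Γ t T := by
    rw [Matrix.sub_mul, hterm2, hterm1, add_sub_cancel_left]
  rw [← key, Matrix.mul_nonsing_inv_cancel_right _ _ hΓdet]
end

section
/- For all 0 ≤ s < t < T one has Γ(s,T)ᵀ E(t,s)ᵀ − E(T,s) Γ(s,t) = Γ(t,T)ᵀ. -/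
open MeasureTheory Matrix Topology Filter

attribute [local instance] Matrix.normedAddCommGroup Matrix.normedSpace

/-- Lemma 3(d): for `0 ≤ s < t < T`,
`Γ(s,T)ᵀ E(t,s)ᵀ − E(T,s) Γ(s,t) = Γ(t,T)ᵀ`. -/
theorem gamma_transpose_identity
    {d p : ℕ} (hd : 1 ≤ d)
    (Q : ℝ → Matrix (Fin d) (Fin d) ℝ) (S : ℝ → Matrix (Fin d) (Fin p) ℝ)
    (hQ : ContinuousOn Q (Set.Ici 0)) (hS : ContinuousOn S (Set.Ici 0))
    (E : ℝ → ℝ → Matrix (Fin d) (Fin d) ℝ)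
    (hEcont : ContinuousOn (fun x : ℝ × ℝ => E x.1 x.2) (Set.Ici 0 ×ˢ Set.Ici 0))
    (hEid : ∀ t : ℝ, 0 ≤ t → E t t = 1)
    (hEmul : ∀ r s t : ℝ, 0 ≤ r → 0 ≤ s → 0 ≤ t → E t s * E s r = E t r)
    (hEderiv : ∀ s : ℝ, 0 ≤ s → ∀ t : ℝ, 0 ≤ t →
      HasDerivAt (fun τ => E τ s) (Q t * E t s) t)
    (κ Γ : ℝ → ℝ → Matrix (Fin d) (Fin d) ℝ)
    (hκ : ∀ s t : ℝ, 0 ≤ s → s ≤ t →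
      κ s t = ∫ u in s..t, E t u * S u * (S u)ᵀ * (E t u)ᵀ)
    (hΓ : ∀ s t : ℝ, 0 ≤ s → s ≤ t → Γ s t = E s t * κ s t)
    (T : ℝ) (hT : 0 < T)
    (hκpd : ∀ s t : ℝ, 0 ≤ s → s < t → (κ s t).IsSymm ∧ (κ s t).PosDef) :
    ∀ s t : ℝ, 0 ≤ s → s < t → t < T →
      (Γ s T)ᵀ * (E t s)ᵀ - E T s * Γ s t = (Γ t T)ᵀ := by
  intro s t hs hst htT
  have ht : (0:ℝ) ≤ t := hs.trans hst.le
  have hT0 : (0:ℝ) ≤ T := hT.le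
  have hsT : s < T := hst.trans htT
  -- continuity helpers
  have hEc : ∀ a : ℝ, 0 ≤ a → ContinuousOn (fun u => E a u) (Set.Ici 0) := by
    intro a ha
    have : ContinuousOn ((fun x : ℝ × ℝ => E x.1 x.2) ∘ fun u => (a, u)) (Set.Ici 0) :=
      hEcont.comp ((continuous_const.prodMk continuous_id).continuousOn)
        (fun u hu => ⟨ha, hu⟩)
    exact this
  have hmul : ∀ {m n k : ℕ} (A : ℝ → Matrix (Fin m) (Fin n) ℝ)
      (B : ℝ → Matrix (Fin n) (Fin k) ℝ),
      ContinuousOn A (Set.Ici 0) → ContinuousOn B (Set.Ici 0) →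
      ContinuousOn (fun u => A u * B u) (Set.Ici 0) := by
    intro m n k A B hA hB
    have hm : Continuous (fun x : Matrix (Fin m) (Fin n) ℝ × Matrix (Fin n) (Fin k) ℝ
        => x.1 * x.2) := Continuous.matrix_mul continuous_fst continuous_snd
    exact hm.comp_continuousOn (hA.prodMk hB)
  have hf : ∀ a : ℝ, 0 ≤ a →
      ContinuousOn (fun u => E a u * S u * (S u)ᵀ * (E a u)ᵀ) (Set.Ici 0) := by
    intro a ha
    have htr : ∀ {m n : ℕ} (A : ℝ → Matrix (Fin m) (Fin n) ℝ),
        ContinuousOn A (Set.Ici 0) → ContinuousOn (fun u => (A u)ᵀ) (Set.Ici 0) :=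
      fun A hA => (Continuous.matrix_transpose continuous_id).comp_continuousOn hA
    have h1 := hmul _ _ (hEc a ha) hS
    have h2 := hmul _ _ h1 (htr _ hS)
    exact hmul _ _ h2 (htr _ (hEc a ha))
  -- interval integrability on subintervals of [0, ∞)
  letI : ENormedAddMonoid (Matrix (Fin d) (Fin d) ℝ) := NormedAddGroup.toENormedAddMonoid
  have hii : ∀ (a b c : ℝ), 0 ≤ a → 0 ≤ b → 0 ≤ c →
      IntervalIntegrable (fun u => E c u * S u * (S u)ᵀ * (E c u)ᵀ) volume a b := by
    intro a b c ha hb hc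
    refine ((hf c hc).mono ?_).intervalIntegrable
    intro u hu
    rcases le_total a b with h | h
    · rw [Set.uIcc_of_le h] at hu; exact ha.trans hu.1
    · rw [Set.uIcc_of_ge h] at hu; exact hb.trans hu.1
  -- κ symmetry
  have hκsT : (κ s T)ᵀ = κ s T := (hκpd s T hs hsT).1
  have hκtT : (κ t T)ᵀ = κ t T := (hκpd t T ht htT).1
  -- rewrite Γ's
  rw [hΓ s T hs hsT.le, hΓ s t hs hst.le, hΓ t T ht htT.le]
  rw [Matrix.transpose_mul, Matrix.transpose_mul, hκsT, hκtT]
  -- (κ s T) * (E s T)ᵀ * (E t s)ᵀ = κ s T * (E t T)ᵀ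
  have e1 : (E s T)ᵀ * (E t s)ᵀ = (E t T)ᵀ := by
    rw [← Matrix.transpose_mul, hEmul T s t hT0 hs ht]
  have e2 : E T s * (E s t * κ s t) = E T t * κ s t := by
    rw [← mul_assoc, hEmul t s T ht hs hT0]
  rw [mul_assoc, e1, e2]
  -- reduce to: (κ s T - κ t T) * (E t T)ᵀ = E T t * κ s t
  have key : (κ s T - κ t T) * (E t T)ᵀ = E T t * κ s t := by
    have hsplit : κ s T - κ t T = ∫ u in s..t, E T u * S u * (S u)ᵀ * (E T u)ᵀ := by
      rw [hκ s T hs hsT.le, hκ t T ht htT.le]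
      have := intervalIntegral.integral_add_adjacent_intervals
        (hii s t T hs ht hT0) (hii t T T ht hT0 hT0)
      rw [← this]; abel
    rw [hsplit, hκ s t hs hst.le]
    -- move constant matrices inside the integrals
    let R : Matrix (Fin d) (Fin d) ℝ →L[ℝ] Matrix (Fin d) (Fin d) ℝ :=
      (LinearMap.mulRight ℝ ((E t T)ᵀ)).toContinuousLinearMap
    let L : Matrix (Fin d) (Fin d) ℝ →L[ℝ] Matrix (Fin d) (Fin d) ℝ :=
      (LinearMap.mulLeft ℝ (E T t)).toContinuousLinearMap
    have hR : (∫ u in s..t, E T u * S u * (S u)ᵀ * (E T u)ᵀ) * (E t T)ᵀ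
        = ∫ u in s..t, (E T u * S u * (S u)ᵀ * (E T u)ᵀ) * (E t T)ᵀ := by
      have := R.intervalIntegral_comp_comm (hii s t T hs ht hT0)
      exact this.symm
    have hL : E T t * (∫ u in s..t, E t u * S u * (S u)ᵀ * (E t u)ᵀ)
        = ∫ u in s..t, E T t * (E t u * S u * (S u)ᵀ * (E t u)ᵀ) := by
      have := L.intervalIntegral_comp_comm (hii s t t hs ht ht)
      exact this.symm
    rw [hR, hL]
    apply intervalIntegral.integral_congr
    intro u hu
    have hu0 : (0:ℝ) ≤ u := by
      rw [Set.uIcc_of_le hst.le] at hu; exact hs.trans hu.1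
    have eA : (E T u)ᵀ * (E t T)ᵀ = (E t u)ᵀ := by
      rw [← Matrix.transpose_mul, hEmul u T t hu0 hT0 ht]
    have eB : E T t * E t u = E T u := hEmul u t T hu0 ht hT0
    show E T u * S u * (S u)ᵀ * (E T u)ᵀ * (E t T)ᵀ
        = E T t * (E t u * S u * (S u)ᵀ * (E t u)ᵀ)
    rw [mul_assoc (E T u * S u * (S u)ᵀ), eA, ← eB]
    simp [Matrix.mul_assoc]
  have key' : κ s T * (E t T)ᵀ - κ t T * (E t T)ᵀ = E T t * κ s t := by
    rw [← sub_mul, key]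
  rw [← key', sub_sub_cancel]
end

section
/- Let 0 ≤ s < t. If there exists t₀ ∈ (s,t) such that the matrix S(t₀) ∈ ℝ^{d×p} has full rank d, then the Kalman-type matrix κ(s,t) = ∫_s^t E(t,u)S(u)S(u)ᵀE(t,u)ᵀ du is positive definite. -/
open MeasureTheory Matrix Topology Filter

attribute [local instance] Matrix.normedAddCommGroup Matrix.normedSpace

set_option maxHeartbeats 1000000

private lemma quad_identity {d p : ℕ} (C : Matrix (Fin d) (Fin p) ℝ) (x : Fin d → ℝ) :
    x ⬝ᵥ ((C * Cᵀ) *ᵥ x) = (Cᵀ *ᵥ x) ⬝ᵥ (Cᵀ *ᵥ x) := by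
  rw [← Matrix.mulVec_mulVec, Matrix.dotProduct_mulVec, ← Matrix.mulVec_transpose]

private lemma transpose_mulVec_ne_zero {d p : ℕ} (A : Matrix (Fin d) (Fin p) ℝ)
    (hA : A.rank = d) {x : Fin d → ℝ} (hx : x ≠ 0) : Aᵀ *ᵥ x ≠ 0 := by
  have hrank : Aᵀ.rank = d := by rw [Matrix.rank_transpose, hA]
  have h1 := LinearMap.finrank_range_add_finrank_ker Aᵀ.mulVecLin
  rw [show Module.finrank ℝ (LinearMap.range Aᵀ.mulVecLin) = d from hrank,
    Module.finrank_pi] at h1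
  simp only [Fintype.card_fin] at h1
  have hker : LinearMap.ker Aᵀ.mulVecLin = ⊥ := by
    have : Module.finrank ℝ (LinearMap.ker Aᵀ.mulVecLin) = 0 := by omega
    exact Submodule.finrank_eq_zero.mp this
  have hinj := LinearMap.ker_eq_bot.mp hker
  intro h
  have : Aᵀ.mulVecLin x = Aᵀ.mulVecLin 0 := by
    rw [Matrix.mulVecLin_apply, Matrix.mulVecLin_apply, h]; simp
  exact hx (hinj this)

/-- Proposition (PROPOSITION_kappa), part (a): if `S(t₀)` has full rank `d` for some
`t₀ ∈ (s,t)`, then the Kalman-type matrix `κ(s,t)` is positive definite. -/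
theorem kalman_posDef_of_full_rank
    {d p : ℕ} (hd : 1 ≤ d) (hdp : d ≤ p)
    (Q : ℝ → Matrix (Fin d) (Fin d) ℝ) (S : ℝ → Matrix (Fin d) (Fin p) ℝ)
    (hQ : ContinuousOn Q (Set.Ici 0)) (hS : ContinuousOn S (Set.Ici 0))
    (E : ℝ → ℝ → Matrix (Fin d) (Fin d) ℝ)
    (hEcont : ContinuousOn (fun x : ℝ × ℝ => E x.1 x.2) (Set.Ici 0 ×ˢ Set.Ici 0))
    (hEid : ∀ t : ℝ, 0 ≤ t → E t t = 1)
    (hEmul : ∀ r s t : ℝ, 0 ≤ r → 0 ≤ s → 0 ≤ t → E t s * E s r = E t r)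
    (hEderiv : ∀ s : ℝ, 0 ≤ s → ∀ t : ℝ, 0 ≤ t →
      HasDerivAt (fun τ => E τ s) (Q t * E t s) t)
    (κ : ℝ → ℝ → Matrix (Fin d) (Fin d) ℝ)
    (hκ : ∀ s t : ℝ, 0 ≤ s → s ≤ t →
      κ s t = ∫ u in s..t, E t u * S u * (S u)ᵀ * (E t u)ᵀ)
    (s t : ℝ) (hs : 0 ≤ s) (hst : s < t)
    (hrank : ∃ t₀ ∈ Set.Ioo s t, (S t₀).rank = d) :
    (κ s t).PosDef := by
  obtain ⟨t₀, ht₀, hrk⟩ := hrank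
  have ht : (0:ℝ) ≤ t := hs.trans hst.le
  have ht₀0 : (0:ℝ) ≤ t₀ := hs.trans ht₀.1.le
  set C : ℝ → Matrix (Fin d) (Fin p) ℝ := fun u => E t u * S u with hC
  have hκeq : κ s t = ∫ u in s..t, C u * (C u)ᵀ := by
    rw [hκ s t hs hst.le]
    have h : (fun u => E t u * S u * (S u)ᵀ * (E t u)ᵀ) = fun u => C u * (C u)ᵀ := by
      funext u; simp [hC, Matrix.transpose_mul, Matrix.mul_assoc]
    rw [h]
  -- continuity facts
  have hIcc : Set.Icc s t ⊆ Set.Ici (0:ℝ) := fun u hu => Set.mem_Ici.mpr (hs.trans hu.1)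
  have hEt : ContinuousOn (fun u => E t u) (Set.Icc s t) := by
    have h1 : ContinuousOn (fun u : ℝ => ((t, u) : ℝ × ℝ)) (Set.Icc s t) :=
      (continuous_const.prodMk continuous_id).continuousOn
    exact hEcont.comp h1 (fun u hu => ⟨Set.mem_Ici.mpr ht, hIcc hu⟩)
  have hSc : ContinuousOn S (Set.Icc s t) := hS.mono hIcc
  have hmulC : Continuous
      (fun q : Matrix (Fin d) (Fin d) ℝ × Matrix (Fin d) (Fin p) ℝ => q.1 * q.2) :=
    continuous_fst.matrix_mul continuous_snd
  have hCc : ContinuousOn C (Set.Icc s t) := by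
    have := hmulC.comp_continuousOn (hEt.prodMk hSc); exact this
  have hMc : ContinuousOn (fun u => C u * (C u)ᵀ) (Set.Icc s t) := by
    have h2 : Continuous
        (fun q : Matrix (Fin d) (Fin p) ℝ × Matrix (Fin d) (Fin p) ℝ => q.1 * q.2ᵀ) :=
      continuous_fst.matrix_mul continuous_snd.matrix_transpose
    exact h2.comp_continuousOn (hCc.prodMk hCc)
  have hMint :=
    ContinuousOn.intervalIntegrable (μ := volume) (u := fun u => C u * (C u)ᵀ) (a := s) (b := t) (by rwa [Set.uIcc_of_le hst.le])
  -- hermitian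
  have herm : (κ s t).IsHermitian := by
    let LT : Matrix (Fin d) (Fin d) ℝ →ₗ[ℝ] Matrix (Fin d) (Fin d) ℝ :=
      { toFun := fun A => Aᴴ
        map_add' := fun A B => Matrix.conjTranspose_add A B
        map_smul' := fun r A => by simp [Matrix.conjTranspose_smul] }
    have key := LT.toContinuousLinearMap.intervalIntegral_comp_comm hMint
    unfold Matrix.IsHermitian
    rw [hκeq]
    have h5 : LT.toContinuousLinearMap (∫ u in s..t, C u * (C u)ᵀ)
        = (∫ u in s..t, C u * (C u)ᵀ)ᴴ := rfl
    rw [← h5]; erw [← key]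
    have h6 : (fun u => LT.toContinuousLinearMap (C u * (C u)ᵀ))
        = fun u => C u * (C u)ᵀ := by
      funext u
      show (C u * (C u)ᵀ)ᴴ = C u * (C u)ᵀ
      simp [Matrix.conjTranspose_mul, Matrix.transpose_mul]
    exact congrArg (fun f : ℝ → Matrix (Fin d) (Fin d) ℝ => ∫ u in s..t, f u) h6
  refine Matrix.posDef_iff_dotProduct_mulVec.mpr ⟨herm, fun x hx => ?_⟩
  have hstar : star x = x := by simp
  rw [hstar, hκeq]
  -- pull the quadratic form inside the integral
  let Lq : Matrix (Fin d) (Fin d) ℝ →ₗ[ℝ] ℝ :=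
    { toFun := fun A => x ⬝ᵥ (A *ᵥ x)
      map_add' := fun A B => by simp [Matrix.add_mulVec]
      map_smul' := fun r A => by simp [Matrix.smul_mulVec] }
  have hL : x ⬝ᵥ ((∫ u in s..t, C u * (C u)ᵀ) *ᵥ x)
      = ∫ u in s..t, x ⬝ᵥ ((C u * (C u)ᵀ) *ᵥ x) :=
    (Lq.toContinuousLinearMap.intervalIntegral_comp_comm hMint).symm
  rw [hL]
  have hgq : (fun u => x ⬝ᵥ ((C u * (C u)ᵀ) *ᵥ x))
      = fun u => ((C u)ᵀ *ᵥ x) ⬝ᵥ ((C u)ᵀ *ᵥ x) := by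
    funext u; exact quad_identity _ x
  rw [hgq]
  set g : ℝ → ℝ := fun u => ((C u)ᵀ *ᵥ x) ⬝ᵥ ((C u)ᵀ *ᵥ x) with hg
  have hgnn : ∀ u, 0 ≤ g u := fun u =>
    Finset.sum_nonneg fun i _ => mul_self_nonneg _
  have hgc : ContinuousOn g (Set.Icc s t) := by
    have hmv : Continuous (fun A : Matrix (Fin d) (Fin p) ℝ => Aᵀ *ᵥ x) :=
      (continuous_id.matrix_transpose).matrix_mulVec continuous_const
    have h3 : Continuous (fun A : Matrix (Fin d) (Fin p) ℝ => (Aᵀ *ᵥ x) ⬝ᵥ (Aᵀ *ᵥ x)) :=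
      hmv.dotProduct hmv
    exact h3.comp_continuousOn hCc
  -- g t₀ > 0
  have hy : (E t t₀)ᵀ *ᵥ x ≠ 0 := by
    intro h
    have h4 : (E t₀ t)ᵀ *ᵥ ((E t t₀)ᵀ *ᵥ x) = x := by
      rw [Matrix.mulVec_mulVec, ← Matrix.transpose_mul, hEmul t t₀ t ht ht₀0 ht,
        hEid t ht]
      simp
    rw [h] at h4
    simp only [Matrix.mulVec_zero] at h4
    exact hx h4.symm
  have hne : (C t₀)ᵀ *ᵥ x ≠ 0 := by
    have hCt₀ : (C t₀)ᵀ *ᵥ x = (S t₀)ᵀ *ᵥ ((E t t₀)ᵀ *ᵥ x) := by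
      show (E t t₀ * S t₀)ᵀ *ᵥ x = _
      rw [Matrix.transpose_mul, ← Matrix.mulVec_mulVec]
    rw [hCt₀]
    exact transpose_mulVec_ne_zero _ hrk hy
  have hgt₀ : 0 < g t₀ :=
    (hgnn t₀).lt_of_ne fun h => hne (dotProduct_self_eq_zero.mp h.symm)
  -- a small interval around t₀ where g is large
  have hcontAt : ContinuousAt g t₀ := hgc.continuousAt (Icc_mem_nhds ht₀.1 ht₀.2)
  have hev : ∀ᶠ u in 𝓝 t₀, g t₀ / 2 < g u ∧ u ∈ Set.Ioo s t :=
    (hcontAt.eventually (eventually_gt_nhds (half_lt_self hgt₀))).and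
      (isOpen_Ioo.eventually_mem ht₀)
  obtain ⟨ε, hε, hball⟩ := Metric.eventually_nhds_iff.mp hev
  set a := t₀ - ε/2 with ha
  set b := t₀ + ε/2 with hb
  have hab : a < b := by rw [ha, hb]; linarith
  have hball' : ∀ u ∈ Set.Icc a b, g t₀ / 2 < g u ∧ u ∈ Set.Ioo s t := by
    intro u hu
    apply hball
    rw [Real.dist_eq]
    have h7 : |u - t₀| ≤ ε/2 := abs_le.mpr ⟨by rw [ha] at hu; linarith [hu.1],
      by rw [hb] at hu; linarith [hu.2]⟩
    linarith
  have hsa : s < a := (hball' a ⟨le_rfl, hab.le⟩).2.1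
  have hbt : b < t := (hball' b ⟨hab.le, le_rfl⟩).2.2
  have hsub : ∀ c e : ℝ, s ≤ c → c ≤ e → e ≤ t → IntervalIntegrable g volume c e := by
    intro c e h1 h2 h3
    apply ContinuousOn.intervalIntegrable
    apply hgc.mono
    rw [Set.uIcc_of_le h2]
    exact Set.Icc_subset_Icc h1 h3
  have hsplit : (∫ u in s..t, g u)
      = (∫ u in s..a, g u) + ((∫ u in a..b, g u) + (∫ u in b..t, g u)) := by
    rw [intervalIntegral.integral_add_adjacent_intervals (hsub a b hsa.le hab.le hbt.le)
      (hsub b t (hsa.le.trans hab.le) hbt.le le_rfl),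
      intervalIntegral.integral_add_adjacent_intervals (hsub s a le_rfl hsa.le
        (hab.le.trans hbt.le)) (hsub a t hsa.le (hab.le.trans hbt.le) le_rfl)]
  have h1 : 0 ≤ ∫ u in s..a, g u :=
    intervalIntegral.integral_nonneg hsa.le fun u _ => hgnn u
  have h2 : 0 ≤ ∫ u in b..t, g u :=
    intervalIntegral.integral_nonneg hbt.le fun u _ => hgnn u
  have hmid : g t₀ / 2 * (b - a) ≤ ∫ u in a..b, g u := by
    have hmono := intervalIntegral.integral_mono_on hab.le intervalIntegrable_const
      (hsub a b hsa.le hab.le hbt.le) (fun u hu => (hball' u hu).1.le)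
    rw [intervalIntegral.integral_const, smul_eq_mul, mul_comm] at hmono; exact hmono
  have hpos : 0 < g t₀ / 2 * (b - a) := by
    apply mul_pos (by linarith) (by linarith)
  calc (0:ℝ) < g t₀ / 2 * (b - a) := hpos
    _ ≤ ∫ u in a..b, g u := hmid
    _ ≤ (∫ u in s..a, g u) + ((∫ u in a..b, g u) + (∫ u in b..t, g u)) := by linarith
    _ = ∫ u in s..t, g u := hsplit.symm
end

section
/- For all 0 ≤ s ≤ u < T one has Γ(s,T) Γ(0,T)⁻¹ E(0,u) + Γ(0,s)ᵀ (Γ(0,T)ᵀ)⁻¹ E(T,u) = E(s,u). -/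
set_option maxHeartbeats 2000000


open MeasureTheory Matrix Topology Filter

attribute [local instance] Matrix.normedAddCommGroup Matrix.normedSpace

/-- Identity (gen_bridge_evol): for `0 ≤ s ≤ u < T`,
`Γ(s,T) Γ(0,T)⁻¹ E(0,u) + Γ(0,s)ᵀ (Γ(0,T)ᵀ)⁻¹ E(T,u) = E(s,u)`. -/
theorem bridge_evolution_identity
    {d p : ℕ} (hd : 1 ≤ d)
    (Q : ℝ → Matrix (Fin d) (Fin d) ℝ) (S : ℝ → Matrix (Fin d) (Fin p) ℝ)
    (hQ : ContinuousOn Q (Set.Ici 0)) (hS : ContinuousOn S (Set.Ici 0))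
    (E : ℝ → ℝ → Matrix (Fin d) (Fin d) ℝ)
    (hEcont : ContinuousOn (fun x : ℝ × ℝ => E x.1 x.2) (Set.Ici 0 ×ˢ Set.Ici 0))
    (hEid : ∀ t : ℝ, 0 ≤ t → E t t = 1)
    (hEmul : ∀ r s t : ℝ, 0 ≤ r → 0 ≤ s → 0 ≤ t → E t s * E s r = E t r)
    (hEderiv : ∀ s : ℝ, 0 ≤ s → ∀ t : ℝ, 0 ≤ t →
      HasDerivAt (fun τ => E τ s) (Q t * E t s) t)
    (κ Γ : ℝ → ℝ → Matrix (Fin d) (Fin d) ℝ)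
    (hκ : ∀ s t : ℝ, 0 ≤ s → s ≤ t →
      κ s t = ∫ u in s..t, E t u * S u * (S u)ᵀ * (E t u)ᵀ)
    (hΓ : ∀ s t : ℝ, 0 ≤ s → s ≤ t → Γ s t = E s t * κ s t)
    (T : ℝ) (hT : 0 < T)
    (hκpd : ∀ s t : ℝ, 0 ≤ s → s < t → (κ s t).IsSymm ∧ (κ s t).PosDef) :
    ∀ s u : ℝ, 0 ≤ s → s ≤ u → u < T →
      Γ s T * (Γ 0 T)⁻¹ * E 0 u + (Γ 0 s)ᵀ * ((Γ 0 T)ᵀ)⁻¹ * E T u = E s u := by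
  intro s u hs hsu huT
  letI : ENormedAddMonoid (Matrix (Fin d) (Fin d) ℝ) :=
    NormedAddCommGroup.toENormedAddCommMonoid.toENormedAddMonoid
  have hsT : s < T := lt_of_le_of_lt hsu huT
  have hT0 : (0:ℝ) ≤ T := hT.le
  have hu0 : 0 ≤ u := hs.trans hsu
  -- inverses of E
  have hEinv : ∀ a b : ℝ, 0 ≤ a → 0 ≤ b → E a b * E b a = 1 := by
    intro a b ha hb
    rw [hEmul a b a ha hb ha, hEid a ha]
  -- continuity of the integrand
  have hcont : ∀ t : ℝ, 0 ≤ t → ContinuousOn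
      (fun v : ℝ => E t v * S v * (S v)ᵀ * (E t v)ᵀ) (Set.Ici 0) := by
    intro t ht
    have hE : ContinuousOn (fun v : ℝ => E t v) (Set.Ici 0) := by
      have hmk : ContinuousOn (fun v : ℝ => ((t, v) : ℝ × ℝ)) (Set.Ici (0:ℝ)) :=
        (Continuous.prodMk_right t).continuousOn
      exact hEcont.comp hmk (fun x hx => ⟨ht, hx⟩)
    have hEt : ContinuousOn (fun v : ℝ => (E t v)ᵀ) (Set.Ici 0) :=
      (continuous_id.matrix_transpose).comp_continuousOn hE
    have hSt : ContinuousOn (fun v : ℝ => (S v)ᵀ) (Set.Ici 0) :=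
      (continuous_id.matrix_transpose).comp_continuousOn hS
    have h1 : ContinuousOn (fun v : ℝ => E t v * S v) (Set.Ici 0) :=
      (continuous_fst.matrix_mul continuous_snd).comp_continuousOn (hE.prodMk hS)
    have h2 : ContinuousOn (fun v : ℝ => E t v * S v * (S v)ᵀ) (Set.Ici 0) :=
      (continuous_fst.matrix_mul continuous_snd).comp_continuousOn (h1.prodMk hSt)
    exact (continuous_fst.matrix_mul continuous_snd).comp_continuousOn (h2.prodMk hEt)
  have hsub : ∀ a b : ℝ, 0 ≤ a → 0 ≤ b → Set.uIcc a b ⊆ Set.Ici (0:ℝ) := by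
    intro a b ha hb x hx
    exact le_trans (le_min ha hb) hx.1
  have hint : ∀ a b : ℝ, 0 ≤ a → 0 ≤ b →
      IntervalIntegrable (fun v : ℝ => E T v * S v * (S v)ᵀ * (E T v)ᵀ)
        MeasureTheory.volume a b := by
    intro a b ha hb
    exact ((hcont T hT0).mono (hsub a b ha hb)).intervalIntegrable
  -- the splitting of κ 0 T
  have split : (∫ v in (0:ℝ)..s, E T v * S v * (S v)ᵀ * (E T v)ᵀ)
      + (∫ v in s..T, E T v * S v * (S v)ᵀ * (E T v)ᵀ)
      = ∫ v in (0:ℝ)..T, E T v * S v * (S v)ᵀ * (E T v)ᵀ :=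
    intervalIntegral.integral_add_adjacent_intervals (hint 0 s le_rfl hs)
      (hint s T hs hT0)
  -- conjugation map
  set L : Matrix (Fin d) (Fin d) ℝ →L[ℝ] Matrix (Fin d) (Fin d) ℝ :=
    LinearMap.toContinuousLinearMap
      ((LinearMap.mulRight ℝ ((E T s)ᵀ)).comp (LinearMap.mulLeft ℝ (E T s))) with hL
  have hLapp : ∀ x : Matrix (Fin d) (Fin d) ℝ, L x = E T s * x * (E T s)ᵀ := by
    intro x
    simp [hL]
  have hgint : IntervalIntegrable (fun v : ℝ => E s v * S v * (S v)ᵀ * (E s v)ᵀ)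
      MeasureTheory.volume 0 s :=
    ((hcont s hs).mono (hsub 0 s le_rfl hs)).intervalIntegrable
  have hEqOn : Set.EqOn (fun v : ℝ => E T v * S v * (S v)ᵀ * (E T v)ᵀ)
      (fun v : ℝ => L (E s v * S v * (S v)ᵀ * (E s v)ᵀ)) (Set.uIcc 0 s) := by
    intro v hv
    have hv0 : 0 ≤ v := hsub 0 s le_rfl hs hv
    have h1 : E T v = E T s * E s v := (hEmul v s T hv0 hs hT0).symm
    simp only [hLapp, h1, Matrix.transpose_mul, Matrix.mul_assoc]
  have piece : (∫ v in (0:ℝ)..s, E T v * S v * (S v)ᵀ * (E T v)ᵀ)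
      = E T s * κ 0 s * (E T s)ᵀ := by
    rw [intervalIntegral.integral_congr hEqOn]
    erw [L.intervalIntegral_comp_comm hgint]
    rw [← hκ 0 s le_rfl hs]
    exact hLapp _
  have key : κ 0 T = E T s * κ 0 s * (E T s)ᵀ + κ s T := by
    rw [hκ 0 T le_rfl hT0, ← split, piece, ← hκ s T hs hsT.le]
  -- symmetry and invertibility
  have hKpd := hκpd 0 T le_rfl hT
  have hKdet : IsUnit (κ 0 T).det := hKpd.2.det_pos.ne'.isUnit
  have hKinv : κ 0 T * (κ 0 T)⁻¹ = 1 := Matrix.mul_nonsing_inv _ hKdet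
  have hKsymm : (κ 0 T)ᵀ = κ 0 T := hKpd.1
  have hKinvsymm : ((κ 0 T)⁻¹)ᵀ = (κ 0 T)⁻¹ := by
    rw [Matrix.transpose_nonsing_inv, hKsymm]
  have hk0s_symm : (κ 0 s)ᵀ = κ 0 s := by
    rcases eq_or_lt_of_le hs with h | h
    · have h0 : κ 0 s = 0 := by
        rw [hκ 0 s le_rfl hs, ← h, intervalIntegral.integral_same]
      rw [h0, Matrix.transpose_zero]
    · exact (hκpd 0 s le_rfl h).1
  -- inverses of Γ
  have hΓinv : (Γ 0 T)⁻¹ = (κ 0 T)⁻¹ * E T 0 := by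
    apply Matrix.inv_eq_right_inv
    rw [hΓ 0 T le_rfl hT0, Matrix.mul_assoc, ← Matrix.mul_assoc (κ 0 T), hKinv,
      Matrix.one_mul, hEinv 0 T le_rfl hT0]
  have hΓTinv : ((Γ 0 T)ᵀ)⁻¹ = (E T 0)ᵀ * (κ 0 T)⁻¹ := by
    rw [← Matrix.transpose_nonsing_inv, hΓinv, Matrix.transpose_mul, hKinvsymm]
  -- product identities
  have hETu : E T 0 * E 0 u = E T u := hEmul u 0 T hu0 le_rfl hT0
  have hETs : ∀ X : Matrix (Fin d) (Fin d) ℝ,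
      (E 0 s)ᵀ * ((E T 0)ᵀ * X) = (E T s)ᵀ * X := by
    intro X
    rw [← Matrix.mul_assoc, ← Matrix.transpose_mul, hEmul s 0 T hs le_rfl hT0]
  have honeX : ∀ X : Matrix (Fin d) (Fin d) ℝ, E s T * (E T s * X) = X := by
    intro X
    rw [← Matrix.mul_assoc, hEinv s T hs hT0, Matrix.one_mul]
  have main : Γ s T * (Γ 0 T)⁻¹ * E 0 u + (Γ 0 s)ᵀ * ((Γ 0 T)ᵀ)⁻¹ * E T u
      = E s T * ((κ s T + E T s * κ 0 s * (E T s)ᵀ) * ((κ 0 T)⁻¹ * E T u)) := by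
    rw [hΓ s T hs hsT.le, hΓ 0 s le_rfl hs, hΓinv, hΓTinv, Matrix.transpose_mul,
      hk0s_symm]
    simp only [add_mul, mul_add, Matrix.mul_assoc, hETs, honeX, hETu]
  rw [main, add_comm, ← key, ← Matrix.mul_assoc (κ 0 T), hKinv, Matrix.one_mul,
    hEmul u T s hu0 hT0 hs]
end

section
/- For every t ∈ (0,T), the matrix-valued function τ ↦ Γ(τ,T) is differentiable at t with derivative ∂₁Γ(t,T) = Q(t)Γ(t,T) − S(t)S(t)ᵀ E(T,t)ᵀ. -/
open MeasureTheory Matrix Topology Filter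

attribute [local instance] Matrix.normedAddCommGroup Matrix.normedSpace

/-- Matrix multiplication as a continuous bilinear map (continuity from finite dimension). -/
noncomputable def matMulCLM (d : ℕ) :
    Matrix (Fin d) (Fin d) ℝ →L[ℝ] Matrix (Fin d) (Fin d) ℝ →L[ℝ] Matrix (Fin d) (Fin d) ℝ :=
  LinearMap.toContinuousLinearMap
    ((LinearMap.toContinuousLinearMap.toLinearMap).comp
      (LinearMap.mul ℝ (Matrix (Fin d) (Fin d) ℝ)))

@[simp] lemma matMulCLM_apply (d : ℕ) (A B : Matrix (Fin d) (Fin d) ℝ) :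
    matMulCLM d A B = A * B := rfl

/-- Product rule for matrix-valued functions of a real variable. -/
lemma hasDerivAt_matrix_mul {d : ℕ} {f g : ℝ → Matrix (Fin d) (Fin d) ℝ}
    {f' g' : Matrix (Fin d) (Fin d) ℝ} {x : ℝ}
    (hf : HasDerivAt f f' x) (hg : HasDerivAt g g' x) :
    HasDerivAt (fun τ => f τ * g τ) (f x * g' + f' * g x) x := by
  exact (matMulCLM d).hasDerivAt_of_bilinear (fun _ => hf) (fun _ => hg)


/-- Heterogeneous matrix multiplication as a continuous bilinear map. -/
noncomputable def mulCLM (a b c : ℕ) :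
    Matrix (Fin a) (Fin b) ℝ →L[ℝ] Matrix (Fin b) (Fin c) ℝ →L[ℝ] Matrix (Fin a) (Fin c) ℝ :=
  LinearMap.toContinuousLinearMap
    ((LinearMap.toContinuousLinearMap.toLinearMap).comp
      (LinearMap.mk₂ ℝ (· * ·) (fun M N P => Matrix.add_mul M N P) (fun r M N => Matrix.smul_mul r M N)
        (fun M N P => Matrix.mul_add M N P) (fun r M N => Matrix.mul_smul M r N)))

@[simp] lemma mulCLM_apply (a b c : ℕ) (A : Matrix (Fin a) (Fin b) ℝ)
    (B : Matrix (Fin b) (Fin c) ℝ) : mulCLM a b c A B = A * B := rfl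

/-- Transpose as a continuous linear map. -/
noncomputable def transCLM (a b : ℕ) :
    Matrix (Fin a) (Fin b) ℝ →L[ℝ] Matrix (Fin b) (Fin a) ℝ :=
  LinearMap.toContinuousLinearMap
    (Matrix.transposeLinearEquiv (Fin a) (Fin b) ℝ ℝ).toLinearMap

@[simp] lemma transCLM_apply (a b : ℕ) (A : Matrix (Fin a) (Fin b) ℝ) :
    transCLM a b A = Aᵀ := rfl

set_option maxHeartbeats 1000000 in
/-- Identity (SEGED21): for `t ∈ (0,T)`, the map `τ ↦ Γ(τ,T)` is differentiable at `t`
with `∂₁Γ(t,T) = Q(t)Γ(t,T) − S(t)S(t)ᵀ E(T,t)ᵀ`. -/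
theorem gamma_first_partial_derivative
    {d p : ℕ} (hd : 1 ≤ d)
    (Q : ℝ → Matrix (Fin d) (Fin d) ℝ) (S : ℝ → Matrix (Fin d) (Fin p) ℝ)
    (hQ : ContinuousOn Q (Set.Ici 0)) (hS : ContinuousOn S (Set.Ici 0))
    (E : ℝ → ℝ → Matrix (Fin d) (Fin d) ℝ)
    (hEcont : ContinuousOn (fun x : ℝ × ℝ => E x.1 x.2) (Set.Ici 0 ×ˢ Set.Ici 0))
    (hEid : ∀ t : ℝ, 0 ≤ t → E t t = 1)
    (hEmul : ∀ r s t : ℝ, 0 ≤ r → 0 ≤ s → 0 ≤ t → E t s * E s r = E t r)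
    (hEderiv : ∀ s : ℝ, 0 ≤ s → ∀ t : ℝ, 0 ≤ t →
      HasDerivAt (fun τ => E τ s) (Q t * E t s) t)
    (κ Γ : ℝ → ℝ → Matrix (Fin d) (Fin d) ℝ)
    (hκ : ∀ s t : ℝ, 0 ≤ s → s ≤ t →
      κ s t = ∫ u in s..t, E t u * S u * (S u)ᵀ * (E t u)ᵀ)
    (hΓ : ∀ s t : ℝ, 0 ≤ s → s ≤ t → Γ s t = E s t * κ s t)
    (T : ℝ) (hT : 0 < T) :
    ∀ t : ℝ, 0 < t → t < T →
      HasDerivAt (fun τ => Γ τ T) (Q t * Γ t T - S t * (S t)ᵀ * (E T t)ᵀ) t := by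
  intro t ht htT
  have hT0 : (0:ℝ) ≤ T := hT.le
  have ht0 : (0:ℝ) ≤ t := ht.le
  set f : ℝ → Matrix (Fin d) (Fin d) ℝ :=
    fun u => E T u * S u * (S u)ᵀ * (E T u)ᵀ with hfdef
  -- continuity of `u ↦ E T u` on `Ici 0`
  have hET : ContinuousOn (fun u => E T u) (Set.Ici 0) := by
    have hc : ContinuousOn (fun u : ℝ => ((T, u) : ℝ × ℝ)) (Set.Ici 0) :=
      (continuous_const.prodMk continuous_id).continuousOn
    exact hEcont.comp hc (fun u hu => ⟨Set.mem_Ici.2 hT0, hu⟩)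
  have hSt : ContinuousOn (fun u => (S u)ᵀ) (Set.Ici 0) :=
    (transCLM d p).continuous.comp_continuousOn hS
  have hETt : ContinuousOn (fun u => (E T u)ᵀ) (Set.Ici 0) :=
    (transCLM d d).continuous.comp_continuousOn hET
  have c1 : ContinuousOn (fun u => E T u * S u) (Set.Ici 0) :=
    (mulCLM d d p).continuous₂.comp_continuousOn (hET.prodMk hS)
  have c2 : ContinuousOn (fun u => E T u * S u * (S u)ᵀ) (Set.Ici 0) :=
    (mulCLM d p d).continuous₂.comp_continuousOn (c1.prodMk hSt)
  have hfcont : ContinuousOn f (Set.Ici 0) :=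
    (mulCLM d d d).continuous₂.comp_continuousOn (c2.prodMk hETt)
  have hIci_mem : Set.Ici (0:ℝ) ∈ 𝓝 t :=
    mem_of_superset (Ioi_mem_nhds ht) Set.Ioi_subset_Ici_self
  have hfc_at : ContinuousAt f t := hfcont.continuousAt hIci_mem
  have hsub : Set.uIcc t T ⊆ Set.Ici 0 := by
    rw [Set.uIcc_of_le htT.le]
    exact fun x hx => le_trans ht0 hx.1
  letI : ENormedAddMonoid (Matrix (Fin d) (Fin d) ℝ) := inferInstanceAs (ENormedAddMonoid (Fin d → Fin d → ℝ))
  letI : TopologicalSpace.PseudoMetrizableSpace (Matrix (Fin d) (Fin d) ℝ) := inferInstanceAs (TopologicalSpace.PseudoMetrizableSpace (Fin d → Fin d → ℝ))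
  have hint : IntervalIntegrable f volume t T := (hfcont.mono hsub).intervalIntegrable
  have hmeas : StronglyMeasurableAtFilter f (𝓝 t) :=
    ⟨Set.Ioi 0, Ioi_mem_nhds ht,
      (hfcont.mono Set.Ioi_subset_Ici_self).aestronglyMeasurable measurableSet_Ioi⟩
  have hκd : HasDerivAt (fun τ => ∫ u in τ..T, f u) (-f t) t :=
    intervalIntegral.integral_hasDerivAt_left hint hmeas hfc_at
  have hEd : HasDerivAt (fun τ => E τ T) (Q t * E t T) t := hEderiv T hT0 t ht0
  have hprod := hasDerivAt_matrix_mul hEd hκd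
  -- local identification of Γ with the product
  have heq : (fun τ => E τ T * ∫ u in τ..T, f u) =ᶠ[𝓝 t] (fun τ => Γ τ T) := by
    filter_upwards [Ioo_mem_nhds ht htT] with τ hτ
    rw [hΓ τ T hτ.1.le hτ.2.le, hκ τ T hτ.1.le hτ.2.le]
  have key : E t T * (E T t * S t * (S t)ᵀ * (E T t)ᵀ) = S t * (S t)ᵀ * (E T t)ᵀ := by
    have h1 : E t T * E T t = 1 := by
      rw [hEmul t T t ht0 hT0 ht0, hEid t ht0]
    calc E t T * (E T t * S t * (S t)ᵀ * (E T t)ᵀ)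
        = (E t T * E T t) * (S t * (S t)ᵀ * (E T t)ᵀ) := by
          simp only [Matrix.mul_assoc]
      _ = S t * (S t)ᵀ * (E T t)ᵀ := by rw [h1, Matrix.one_mul]
  have hfin := hprod.congr_of_eventuallyEq heq.symm
  have hrw : E t T * -f t + Q t * E t T * (∫ u in t..T, f u)
      = Q t * Γ t T - S t * (S t)ᵀ * (E T t)ᵀ := by
    rw [hΓ t T ht0 htT.le, hκ t T ht0 htT.le]
    rw [mul_neg, hfdef, key, Matrix.mul_assoc (Q t) (E t T)]
    abel
  rwa [hrw] at hfin
end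

section
/- Fix b ∈ ℝ. For all 0 ≤ s < t < T and all x, y ∈ ℝ one has p_{s,t}(x,y) · p_{t,T}(y,b) / p_{s,T}(x,b) = (2π σ(s,t))^{−1/2} exp( −(y − n_{x,b}(s,t))² / (2σ(s,t)) ); that is, as a function of y the left-hand side is the Gaussian density with mean n_{x,b}(s,t) and variance σ(s,t). -/
open MeasureTheory Topology Filter

private lemma key_exp_identity (A B C E m₁ R bb yy : ℝ) (hA : 0 < A) (hB : 0 < B)
    (hC : C = B + E ^ 2 * A) :
    -(yy - m₁) ^ 2 / (2 * A) + -(bb - (E * yy + R)) ^ 2 / (2 * B)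
      - -(bb - (E * m₁ + R)) ^ 2 / (2 * C)
    = -(yy - (A / C * E * (bb - R) + B / C * m₁)) ^ 2 / (2 * (A * B / C)) := by
  have hC0 : 0 < C := by rw [hC]; positivity
  rw [hC] at *
  field_simp
  ring

/-- One-dimensional version of Lemma 1: for fixed `b ∈ ℝ`, `0 ≤ s < t < T` and `x, y ∈ ℝ`,
the ratio `p_{s,t}(x,y) p_{t,T}(y,b) / p_{s,T}(x,b)` equals the Gaussian density with
mean `n_{x,b}(s,t)` and variance `σ(s,t)`. -/
theorem one_dim_bridge_transition_density
    (q σ : ℝ → ℝ)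
    (hq : ContinuousOn q (Set.Ici 0)) (hσ : ContinuousOn σ (Set.Ici 0))
    (hσne : ∀ t : ℝ, 0 ≤ t → σ t ≠ 0)
    (qbar : ℝ → ℝ) (hqbar : ∀ t : ℝ, qbar t = ∫ u in (0:ℝ)..t, q u)
    (γ : ℝ → ℝ → ℝ)
    (hγ : ∀ s t : ℝ, 0 ≤ s → s ≤ t →
      γ s t = ∫ u in s..t, Real.exp (2 * (qbar t - qbar u)) * (σ u) ^ 2)
    (r : ℝ → ℝ) (hr : ContinuousOn r (Set.Ici 0))
    (m : ℝ → ℝ → ℝ → ℝ)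
    (hm : ∀ (x : ℝ) (s t : ℝ), 0 ≤ s → s ≤ t →
      m x s t = Real.exp (qbar t - qbar s) * x
        + ∫ u in s..t, Real.exp (qbar t - qbar u) * r u)
    (p : ℝ → ℝ → ℝ → ℝ → ℝ)
    (hp : ∀ (s t x y : ℝ), 0 ≤ s → s < t →
      p s t x y = (Real.sqrt (2 * Real.pi * γ s t))⁻¹ *
        Real.exp (-(y - m x s t) ^ 2 / (2 * γ s t)))
    (T : ℝ) (hT : 0 < T)
    (σv : ℝ → ℝ → ℝ)
    (hσv : ∀ s t : ℝ, 0 ≤ s → s ≤ t → t < T → σv s t = γ s t * γ t T / γ s T)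
    (n : ℝ → ℝ → ℝ → ℝ → ℝ)
    (hn : ∀ (a b s t : ℝ), 0 ≤ s → s ≤ t → t < T →
      n a b s t = (γ s t / γ s T) * Real.exp (qbar T - qbar t) *
          (b - ∫ u in t..T, Real.exp (qbar T - qbar u) * r u)
        + (γ t T / γ s T) * m a s t)
    (b : ℝ) :
    ∀ (s t x y : ℝ), 0 ≤ s → s < t → t < T →
      p s t x y * p t T y b / p s T x b
        = (Real.sqrt (2 * Real.pi * σv s t))⁻¹ *
            Real.exp (-(y - n x b s t) ^ 2 / (2 * σv s t)) := by
  intro s t x y hs hst htT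
  have hsle : s ≤ t := hst.le
  have h0t : (0:ℝ) ≤ t := hs.trans hsle
  have htT' : t ≤ T := htT.le
  have hsT : s < T := hst.trans htT
  have h0T : (0:ℝ) ≤ T := hT.le
  -- continuity of `qbar` on `[0, T]`
  have hqbarC : ContinuousOn qbar (Set.Icc 0 T) := by
    have h1 : ContinuousOn (fun v => ∫ u in (0:ℝ)..v, q u) (Set.uIcc 0 T) := by
      apply intervalIntegral.continuousOn_primitive_interval
      rw [Set.uIcc_of_le h0T]
      exact (hq.mono Set.Icc_subset_Ici_self).integrableOn_compact isCompact_Icc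
    rw [Set.uIcc_of_le h0T] at h1
    exact h1.congr (fun v _ => hqbar v)
  -- integrability of the `γ` integrands
  have hIσ : ∀ c a d : ℝ, 0 ≤ a → d ≤ T → a ≤ d →
      IntervalIntegrable (fun u => Real.exp (2 * (c - qbar u)) * (σ u) ^ 2) volume a d := by
    intro c a d ha hd had
    apply ContinuousOn.intervalIntegrable
    rw [Set.uIcc_of_le had]
    have hsub : Set.Icc a d ⊆ Set.Icc 0 T := Set.Icc_subset_Icc ha hd
    have hsub' : Set.Icc a d ⊆ Set.Ici 0 :=
      Set.Icc_subset_Ici_self.trans (Set.Ici_subset_Ici.mpr ha)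
    exact (Real.continuous_exp.comp_continuousOn
        (continuousOn_const.mul (continuousOn_const.sub (hqbarC.mono hsub)))).mul
      ((hσ.mono hsub').pow 2)
  -- integrability of the `m` integrands
  have hIr : ∀ c a d : ℝ, 0 ≤ a → d ≤ T → a ≤ d →
      IntervalIntegrable (fun u => Real.exp (c - qbar u) * r u) volume a d := by
    intro c a d ha hd had
    apply ContinuousOn.intervalIntegrable
    rw [Set.uIcc_of_le had]
    have hsub : Set.Icc a d ⊆ Set.Icc 0 T := Set.Icc_subset_Icc ha hd
    have hsub' : Set.Icc a d ⊆ Set.Ici 0 :=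
      Set.Icc_subset_Ici_self.trans (Set.Ici_subset_Ici.mpr ha)
    exact (Real.continuous_exp.comp_continuousOn
        (continuousOn_const.sub (hqbarC.mono hsub))).mul (hr.mono hsub')
  -- positivity of `γ`
  have hγpos : ∀ a d : ℝ, 0 ≤ a → a < d → d ≤ T → 0 < γ a d := by
    intro a d ha had hd
    rw [hγ a d ha had.le]
    refine intervalIntegral.intervalIntegral_pos_of_pos_on
      (hIσ (qbar d) a d ha hd had.le) (fun u hu => ?_) had
    have hu0 : 0 ≤ u := ha.trans hu.1.le
    exact mul_pos (Real.exp_pos _) (pow_two_pos_of_ne_zero (hσne u hu0))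
  have hA : 0 < γ s t := hγpos s t hs hst htT'
  have hB : 0 < γ t T := hγpos t T h0t htT le_rfl
  have hC : 0 < γ s T := hγpos s T hs hsT le_rfl
  -- decomposition of `γ s T`
  have hCdec : γ s T = γ t T + Real.exp (qbar T - qbar t) ^ 2 * γ s t := by
    rw [hγ s T hs hsT.le, hγ t T h0t htT', hγ s t hs hsle]
    have hsplit : (∫ u in s..T, Real.exp (2 * (qbar T - qbar u)) * (σ u) ^ 2)
        = (∫ u in s..t, Real.exp (2 * (qbar T - qbar u)) * (σ u) ^ 2)
          + ∫ u in t..T, Real.exp (2 * (qbar T - qbar u)) * (σ u) ^ 2 :=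
      (intervalIntegral.integral_add_adjacent_intervals
        (hIσ (qbar T) s t hs htT' hsle) (hIσ (qbar T) t T h0t le_rfl htT')).symm
    rw [hsplit, add_comm]
    congr 1
    rw [← intervalIntegral.integral_const_mul]
    apply intervalIntegral.integral_congr
    intro u _
    show Real.exp (2 * (qbar T - qbar u)) * (σ u) ^ 2
      = Real.exp (qbar T - qbar t) ^ 2 * (Real.exp (2 * (qbar t - qbar u)) * (σ u) ^ 2)
    have h1 : Real.exp (qbar T - qbar t) ^ 2 * Real.exp (2 * (qbar t - qbar u))
        = Real.exp (2 * (qbar T - qbar u)) := by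
      rw [sq, ← Real.exp_add, ← Real.exp_add]
      congr 1
      ring
    rw [← h1]; ring
  -- decomposition of `m x s T`
  have hmT : m x s T = Real.exp (qbar T - qbar t) * m x s t
      + ∫ u in t..T, Real.exp (qbar T - qbar u) * r u := by
    rw [hm x s T hs hsT.le, hm x s t hs hsle]
    have hsplit : (∫ u in s..T, Real.exp (qbar T - qbar u) * r u)
        = (∫ u in s..t, Real.exp (qbar T - qbar u) * r u)
          + ∫ u in t..T, Real.exp (qbar T - qbar u) * r u :=
      (intervalIntegral.integral_add_adjacent_intervals
        (hIr (qbar T) s t hs htT' hsle) (hIr (qbar T) t T h0t le_rfl htT')).symm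
    rw [hsplit]
    have h2 : (∫ u in s..t, Real.exp (qbar T - qbar u) * r u)
        = Real.exp (qbar T - qbar t) * ∫ u in s..t, Real.exp (qbar t - qbar u) * r u := by
      rw [← intervalIntegral.integral_const_mul]
      apply intervalIntegral.integral_congr
      intro u _
      show Real.exp (qbar T - qbar u) * r u
        = Real.exp (qbar T - qbar t) * (Real.exp (qbar t - qbar u) * r u)
      have h1 : Real.exp (qbar T - qbar t) * Real.exp (qbar t - qbar u)
          = Real.exp (qbar T - qbar u) := by
        rw [← Real.exp_add]; congr 1; ring
      rw [← h1]; ring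
    have hE : Real.exp (qbar T - qbar s)
        = Real.exp (qbar T - qbar t) * Real.exp (qbar t - qbar s) := by
      rw [← Real.exp_add]; congr 1; ring
    rw [h2, hE]; ring
  rw [hp s t x y hs hst, hp t T y b h0t htT, hp s T x b hs hsT, hσv s t hs hsle htT,
    hn x b s t hs hsle htT, hm y t T h0t htT', hmT]
  set A := γ s t with hA'
  set B := γ t T with hB'
  set C := γ s T with hC'
  set E := Real.exp (qbar T - qbar t) with hE'
  set R := ∫ u in t..T, Real.exp (qbar T - qbar u) * r u with hR'
  set m₁ := m x s t with hm₁'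
  have h2πA : (0:ℝ) < 2 * Real.pi * A := by have := Real.pi_pos; positivity
  have h2πB : (0:ℝ) < 2 * Real.pi * B := by have := Real.pi_pos; positivity
  have h2πC : (0:ℝ) < 2 * Real.pi * C := by have := Real.pi_pos; positivity
  have hsqrt : Real.sqrt (2 * Real.pi * (A * B / C))
      = Real.sqrt (2 * Real.pi * A) * Real.sqrt (2 * Real.pi * B)
        / Real.sqrt (2 * Real.pi * C) := by
    have h1 : 2 * Real.pi * (A * B / C)
        = (2 * Real.pi * A) * (2 * Real.pi * B) / (2 * Real.pi * C) := by
      field_simp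
    rw [h1, Real.sqrt_div (by positivity : (0:ℝ) ≤ 2 * Real.pi * A * (2 * Real.pi * B)),
      Real.sqrt_mul h2πA.le]
  have ha0 : Real.sqrt (2 * Real.pi * A) ≠ 0 := (Real.sqrt_pos.mpr h2πA).ne'
  have hb0 : Real.sqrt (2 * Real.pi * B) ≠ 0 := (Real.sqrt_pos.mpr h2πB).ne'
  have hc0 : Real.sqrt (2 * Real.pi * C) ≠ 0 := (Real.sqrt_pos.mpr h2πC).ne'
  rw [hsqrt, ← key_exp_identity A B C E m₁ R b y hA hB hCdec, Real.exp_sub, Real.exp_add]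
  field_simp
end

section
/- For all 0 ≤ s < t < T and all x, y ∈ ℝ one has p_{t−s}(x,y) · p_{T−t}(y,0) / p_{T−s}(x,0) = (2π σ(s,t))^{−1/2} exp( −( y − (sinh(q(T−t))/sinh(q(T−s))) x )² / (2σ(s,t)) ), where σ(s,t) = (σ²/q) · sinh(q(T−t)) sinh(q(t−s)) / sinh(q(T−s)); that is, as a function of y the left-hand side is the Gaussian density with mean (sinh(q(T−t))/sinh(q(T−s))) x and variance σ(s,t). -/
open MeasureTheory Topology Filter

theorem exp_ident (q σ u v x y : ℝ) (hq : q ≠ 0) (hσ : σ ≠ 0) (hu : u ≠ 0) (hv : v ≠ 0)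
    (hA : u ^ 2 - 1 ≠ 0) (hB : v ^ 2 - 1 ≠ 0) (hC : (u * v) ^ 2 - 1 ≠ 0) :
    -(y - u * x) ^ 2 / (2 * σ ^ 2 * ((u ^ 2 - 1) / (2 * q)))
      + -(0 - v * y) ^ 2 / (2 * σ ^ 2 * ((v ^ 2 - 1) / (2 * q)))
      - -(0 - u * v * x) ^ 2 / (2 * σ ^ 2 * (((u * v) ^ 2 - 1) / (2 * q)))
    = -(y - ((v ^ 2 - 1) / (2 * v)) / (((u * v) ^ 2 - 1) / (2 * (u * v))) * x) ^ 2 /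
        (2 * (σ ^ 2 / q * (((v ^ 2 - 1) / (2 * v)) * ((u ^ 2 - 1) / (2 * u)) /
            (((u * v) ^ 2 - 1) / (2 * (u * v)))))) := by
  have hC' : u ^ 2 * v ^ 2 - 1 ≠ 0 := by rw [← mul_pow]; exact hC
  field_simp
  ring

/-- Identity (OU_bridge_densities): for the Ornstein–Uhlenbeck transition densities,
`p_{t−s}(x,y) p_{T−t}(y,0) / p_{T−s}(x,0)` is the Gaussian density with mean
`(sinh(q(T−t))/sinh(q(T−s))) x` and variance
`σ(s,t) = (σ²/q) sinh(q(T−t)) sinh(q(t−s)) / sinh(q(T−s))`. -/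
theorem OU_bridge_densities
    (q σ T : ℝ) (hq : q ≠ 0) (hσ : σ ≠ 0) (hT : 0 < T)
    (κq : ℝ → ℝ) (hκq : ∀ t : ℝ, κq t = (Real.exp (2 * q * t) - 1) / (2 * q))
    (p : ℝ → ℝ → ℝ → ℝ)
    (hp : ∀ (t x y : ℝ), 0 < t →
      p t x y = (Real.sqrt (2 * Real.pi * σ ^ 2 * κq t))⁻¹ *
        Real.exp (-(y - Real.exp (q * t) * x) ^ 2 / (2 * σ ^ 2 * κq t))) :
    ∀ (s t x y : ℝ), 0 ≤ s → s < t → t < T →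
      p (t - s) x y * p (T - t) y 0 / p (T - s) x 0
        = (Real.sqrt (2 * Real.pi *
            (σ ^ 2 / q * (Real.sinh (q * (T - t)) * Real.sinh (q * (t - s)) /
              Real.sinh (q * (T - s))))))⁻¹ *
          Real.exp (-(y - Real.sinh (q * (T - t)) / Real.sinh (q * (T - s)) * x) ^ 2 /
            (2 * (σ ^ 2 / q * (Real.sinh (q * (T - t)) * Real.sinh (q * (t - s)) /
              Real.sinh (q * (T - s)))))) := by
  intro s t x y hs hst htT
  have h1 : (0:ℝ) < t - s := by linarith
  have h2 : (0:ℝ) < T - t := by linarith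
  have h3 : (0:ℝ) < T - s := by linarith
  have hpi := Real.pi_pos
  have hσ2 : (0:ℝ) < σ ^ 2 := by positivity
  -- κ in terms of exp squared
  have κ_eq : ∀ r : ℝ, κq r = ((Real.exp (q * r)) ^ 2 - 1) / (2 * q) := by
    intro r
    rw [hκq, ← Real.exp_nat_mul]
    norm_num
    ring_nf
  -- sinh in exp form
  have sinh_eq : ∀ w : ℝ, Real.sinh w = ((Real.exp w) ^ 2 - 1) / (2 * Real.exp w) := by
    intro w
    rw [Real.sinh_eq, Real.exp_neg]
    have := Real.exp_ne_zero w
    field_simp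
  -- sign facts
  have hsq : ∀ r : ℝ, 0 < r → 0 < Real.sinh (q * r) / q := by
    intro r hr
    rcases lt_or_gt_of_ne hq with h | h
    · have hneg : Real.sinh (q * r) < 0 := by
        have : q * r < 0 := mul_neg_of_neg_of_pos h hr
        simpa using Real.sinh_lt_sinh.mpr (show q * r < 0 from this)
      exact div_pos_of_neg_of_neg hneg h
    · have hpos : 0 < Real.sinh (q * r) := by
        have : (0:ℝ) < q * r := by positivity
        simpa using Real.sinh_lt_sinh.mpr this
      exact div_pos hpos h
  have κpos : ∀ r : ℝ, 0 < r → 0 < κq r := by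
    intro r hr
    have h1' := hsq r hr
    have h2' : κq r = Real.exp (q * r) * (Real.sinh (q * r) / q) := by
      rw [κ_eq, sinh_eq]
      have := Real.exp_ne_zero (q * r)
      field_simp
    rw [h2']
    exact mul_pos (Real.exp_pos _) h1'
  have sinh_ne : ∀ r : ℝ, 0 < r → Real.sinh (q * r) ≠ 0 := by
    intro r hr
    have := hsq r hr
    intro h
    rw [h] at this
    simp at this
  -- notation
  set u := Real.exp (q * (t - s)) with hu_def
  set v := Real.exp (q * (T - t)) with hv_def
  have huv : Real.exp (q * (T - s)) = u * v := by
    rw [hu_def, hv_def, ← Real.exp_add]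
    congr 1
    ring
  have hu0 : (0:ℝ) < u := Real.exp_pos _
  have hv0 : (0:ℝ) < v := Real.exp_pos _
  have hu' : u ≠ 0 := ne_of_gt hu0
  have hv' : v ≠ 0 := ne_of_gt hv0
  have hA : u ^ 2 - 1 ≠ 0 := by
    have h := sinh_ne (t - s) h1
    rw [sinh_eq] at h
    intro h0
    apply h
    rw [← hu_def] at *
    rw [h0]
    simp
  have hB : v ^ 2 - 1 ≠ 0 := by
    have h := sinh_ne (T - t) h2
    rw [sinh_eq] at h
    intro h0
    apply h
    rw [h0]
    simp
  have hC : (u * v) ^ 2 - 1 ≠ 0 := by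
    have h := sinh_ne (T - s) h3
    rw [sinh_eq, huv] at h
    intro h0
    apply h
    rw [h0]
    simp
  -- positivity of sqrt arguments
  have hx1 : 0 < 2 * Real.pi * σ ^ 2 * κq (t - s) := by
    have := κpos _ h1; positivity
  have hx2 : 0 < 2 * Real.pi * σ ^ 2 * κq (T - t) := by
    have := κpos _ h2; positivity
  have hx3 : 0 < 2 * Real.pi * σ ^ 2 * κq (T - s) := by
    have := κpos _ h3; positivity
  have hV : 0 < σ ^ 2 / q * (Real.sinh (q * (T - t)) * Real.sinh (q * (t - s)) /
      Real.sinh (q * (T - s))) := by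
    have hA' := hsq _ h1
    have hB' := hsq _ h2
    have hC' := hsq _ h3
    have hCne := sinh_ne _ h3
    have heq : σ ^ 2 / q * (Real.sinh (q * (T - t)) * Real.sinh (q * (t - s)) /
        Real.sinh (q * (T - s)))
        = σ ^ 2 * ((Real.sinh (q * (T - t)) / q) * (Real.sinh (q * (t - s)) / q) /
            (Real.sinh (q * (T - s)) / q)) := by
      field_simp
    rw [heq]
    positivity
  have h2πV : 0 < 2 * Real.pi * (σ ^ 2 / q * (Real.sinh (q * (T - t)) *
      Real.sinh (q * (t - s)) / Real.sinh (q * (T - s)))) := by positivity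
  -- substitute p
  rw [hp _ _ _ h1, hp _ _ _ h2, hp _ _ _ h3]
  have hs1 : Real.sqrt (2 * Real.pi * σ ^ 2 * κq (t - s)) ≠ 0 := by positivity
  have hs2 : Real.sqrt (2 * Real.pi * σ ^ 2 * κq (T - t)) ≠ 0 := by positivity
  have hs3 : Real.sqrt (2 * Real.pi * σ ^ 2 * κq (T - s)) ≠ 0 := by positivity
  -- split into prefactor * exp
  rw [show ∀ (s1 s2 s3 e1 e2 e3 : ℝ), s1⁻¹ * e1 * (s2⁻¹ * e2) / (s3⁻¹ * e3)
      = (s3 / (s1 * s2)) * (e1 * e2 / e3) from fun _ _ _ _ _ _ => by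
        simp only [div_eq_mul_inv, mul_inv, inv_inv]; ring]
  have hexp_comb : Real.exp (-(y - Real.exp (q * (t - s)) * x) ^ 2 / (2 * σ ^ 2 * κq (t - s))) *
      Real.exp (-(0 - Real.exp (q * (T - t)) * y) ^ 2 / (2 * σ ^ 2 * κq (T - t))) /
      Real.exp (-(0 - Real.exp (q * (T - s)) * x) ^ 2 / (2 * σ ^ 2 * κq (T - s)))
      = Real.exp (-(y - Real.exp (q * (t - s)) * x) ^ 2 / (2 * σ ^ 2 * κq (t - s))
          + -(0 - Real.exp (q * (T - t)) * y) ^ 2 / (2 * σ ^ 2 * κq (T - t))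
          - -(0 - Real.exp (q * (T - s)) * x) ^ 2 / (2 * σ ^ 2 * κq (T - s))) := by
    rw [Real.exp_sub, Real.exp_add]
  rw [hexp_comb]
  -- prefactor equality
  have hxprod : (2 * Real.pi * σ ^ 2 * κq (t - s)) * (2 * Real.pi * σ ^ 2 * κq (T - t))
      = (2 * Real.pi * σ ^ 2 * κq (T - s)) *
        (2 * Real.pi * (σ ^ 2 / q * (Real.sinh (q * (T - t)) * Real.sinh (q * (t - s)) /
          Real.sinh (q * (T - s))))) := by
    rw [κ_eq, κ_eq, κ_eq, sinh_eq, sinh_eq, sinh_eq, huv]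
    rw [← hu_def, ← hv_def]
    have hC' : u ^ 2 * v ^ 2 - 1 ≠ 0 := by rw [← mul_pow]; exact hC
    field_simp
  have hpref : Real.sqrt (2 * Real.pi * σ ^ 2 * κq (T - s)) /
      (Real.sqrt (2 * Real.pi * σ ^ 2 * κq (t - s)) *
        Real.sqrt (2 * Real.pi * σ ^ 2 * κq (T - t)))
      = (Real.sqrt (2 * Real.pi * (σ ^ 2 / q * (Real.sinh (q * (T - t)) *
          Real.sinh (q * (t - s)) / Real.sinh (q * (T - s))))))⁻¹ := by
    rw [← Real.sqrt_mul hx1.le, hxprod, Real.sqrt_mul hx3.le]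
    rw [div_mul_eq_div_div, div_self hs3, one_div]
  rw [hpref]
  -- exponent equality
  congr 1
  rw [κ_eq, κ_eq, κ_eq, sinh_eq, sinh_eq, sinh_eq, huv]
  rw [← hu_def, ← hv_def]
  exact congrArg Real.exp (exp_ident q σ u v x y hq hσ hu' hv' hA hB hC)
end
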